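/- arXiv:1007.1927 — 9 statements merged into one kernel-verified Lean document; each statement's English description precedes it below -/
import Mathlib

section
/- Let H be a subgroup of an abelian topological group G that is both dually closed (H is the intersection of the kernels of all continuous characters of G vanishing on H) and dually embedded (every continuous character of H extends to one of G). Then for every subset S of H, the quasi-convex hull of S in H equals the quasi-convex hull of S in G: Q_H(S) = Q_G(S). -/
open Filter Topology

noncomputable section

abbrev 𝕋 := AddCircle (1 : ℝ)

/-- `T₊ = π([-1/4, 1/4]) ⊆ 𝕋`. -/
def Tplus : Set 𝕋 := {x | ∃ r : ℝ, |r| ≤ 1/4 ∧ (r : 𝕋) = x}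

/-- The polar `E^▷`: continuous characters mapping `E` into `T₊`. -/
def polar (G : Type*) [AddCommGroup G] [TopologicalSpace G] (E : Set G) :
    Set (G →+ 𝕋) := {χ | Continuous χ ∧ ∀ x ∈ E, χ x ∈ Tplus}

/-- The quasi-convex hull `Q_G(E) = E^▷◁`. -/
def qcHull (G : Type*) [AddCommGroup G] [TopologicalSpace G] (E : Set G) : Set G :=
  {x | ∀ χ ∈ polar G E, χ x ∈ Tplus}

/-- The set `S = {0} ∪ {± x_n | n ∈ ℕ}` associated to a sequence. -/
def seqSet {G : Type*} [AddCommGroup G] (x : ℕ → G) : Set G :=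
  {0} ∪ {y | ∃ n, y = x n ∨ y = - x n}

/-- `X = {0} ∪ {±(1/b_n mod 1) | n ∈ ℕ} ⊆ 𝕋`. -/
def Xset (b : ℕ → ℕ) : Set 𝕋 :=
  {0} ∪ {x | ∃ n, x = (((b n : ℝ)⁻¹ : ℝ) : 𝕋) ∨ x = -(((b n : ℝ)⁻¹ : ℝ) : 𝕋)}

lemma mem_Tplus_iff_norm {x : 𝕋} : x ∈ Tplus ↔ ‖x‖ ≤ 1/4 := by
  constructor
  · rintro ⟨r, hr, rfl⟩
    rwa [(AddCircle.norm_coe_eq_abs_iff (1:ℝ) one_ne_zero).mpr (by rw [abs_one]; linarith)]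
  · intro hx
    obtain ⟨y, rfl⟩ := QuotientAddGroup.mk_surjective x
    refine ⟨y - round y, ?_, ?_⟩
    · have := AddCircle.norm_eq (p := (1:ℝ)) (x := y)
      simp only [inv_one, one_mul, mul_one] at this
      rw [← this]; exact hx
    · show ((y - round y : ℝ) : 𝕋) = (y : 𝕋)
      have h0 : ((round y : ℝ) : 𝕋) = 0 := by
        rw [AddCircle.coe_eq_zero_iff]
        exact ⟨round y, by simp⟩
      rw [AddCircle.coe_sub, h0, sub_zero]

lemma eq_zero_of_forall_nsmul_mem_Tplus {x : 𝕋} (h : ∀ n : ℕ, n • x ∈ Tplus) : x = 0 := by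
  have h1 : x ∈ Tplus := by simpa using h 1
  rw [mem_Tplus_iff_norm] at h1
  obtain ⟨y, rfl⟩ := QuotientAddGroup.mk_surjective x
  set r := y - round y with hr
  have hxr : ((r : ℝ) : 𝕋) = (y : 𝕋) := by
    have h0 : ((round y : ℝ) : 𝕋) = 0 := by
      rw [AddCircle.coe_eq_zero_iff]; exact ⟨round y, by simp⟩
    rw [AddCircle.coe_sub, h0, sub_zero]
  have hnorm : ‖(y : 𝕋)‖ = |r| := by
    have := AddCircle.norm_eq (p := (1:ℝ)) (x := y)
    simpa using this
  rw [hnorm] at h1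
  by_contra hx0
  have hrne : r ≠ 0 := by
    intro h'
    apply hx0
    rw [← hxr, h']
    simp
  have hrpos : 0 < |r| := abs_pos.mpr hrne
  set n : ℕ := ⌊(1/4) / |r|⌋₊ + 1 with hn
  have hgt : (1/4 : ℝ) < n * |r| := by
    have := Nat.lt_floor_add_one ((1/4) / |r|)
    calc (1/4 : ℝ) = (1/4)/|r| * |r| := by field_simp
    _ < n * |r| := by
      apply mul_lt_mul_of_pos_right _ hrpos
      exact_mod_cast this
  have hle : (n : ℝ) * |r| ≤ 1/2 := by
    have hfl : (⌊(1/4) / |r|⌋₊ : ℝ) * |r| ≤ 1/4 := by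
      have := Nat.floor_le (by positivity : (0:ℝ) ≤ (1/4)/|r|)
      calc (⌊(1/4) / |r|⌋₊ : ℝ) * |r| ≤ (1/4)/|r| * |r| :=
        mul_le_mul_of_nonneg_right this hrpos.le
      _ = 1/4 := div_mul_cancel₀ _ hrpos.ne'
    have : (n : ℝ) * |r| = (⌊(1/4) / |r|⌋₊ : ℝ) * |r| + |r| := by
      rw [hn]; push_cast; ring
    rw [this]; linarith
  have hmem := h n
  rw [mem_Tplus_iff_norm] at hmem
  have hcoe : n • ((y : 𝕋)) = ((n * r : ℝ) : 𝕋) := by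
    rw [← hxr, ← AddCircle.coe_nsmul, nsmul_eq_mul]
  rw [hcoe] at hmem
  have habs : |(n : ℝ) * r| = (n : ℝ) * |r| := by
    rw [abs_mul, Nat.abs_cast]
  have : ‖((n * r : ℝ) : 𝕋)‖ = |(n:ℝ) * r| :=
    (AddCircle.norm_coe_eq_abs_iff (1:ℝ) one_ne_zero).mpr (by rw [abs_one, habs]; linarith)
  rw [this, habs] at hmem
  linarith

/-- if `H` is dually closed and dually embedded in `G`,
then `Q_H(S) = Q_G(S)` for every `S ⊆ H`. -/
theorem stmt2 {G : Type*} [AddCommGroup G] [TopologicalSpace G] [IsTopologicalAddGroup G]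
    (H : AddSubgroup G)
    (hdc : (H : Set G) =
      {x : G | ∀ χ : G →+ 𝕋, Continuous χ → (∀ h ∈ H, χ h = 0) → χ x = 0})
    (hde : ∀ χ : ↥H →+ 𝕋, Continuous χ → ∃ ψ : G →+ 𝕋, Continuous ψ ∧ ∀ h : ↥H, ψ h = χ h)
    (S : Set ↥H) :
    ((↑) '' qcHull ↥H S : Set G) = qcHull G ((↑) '' S) := by
  simp only [qcHull, polar]
  have hTplus0 : (0 : 𝕋) ∈ Tplus := ⟨0, by norm_num, by simp⟩
  ext g
  constructor
  · rintro ⟨h, hh, rfl⟩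
    rintro χ ⟨hχc, hχS⟩
    have := hh (χ.comp H.subtype) ⟨hχc.comp continuous_subtype_val,
      fun s hs => hχS _ ⟨s, hs, rfl⟩⟩
    simpa using this
  · intro hg
    have hgH : g ∈ H := by
      rw [← SetLike.mem_coe, hdc]
      intro χ hχc hχH
      apply eq_zero_of_forall_nsmul_mem_Tplus
      intro n
      have hmem : (n • χ) ∈ ({χ : G →+ 𝕋 | Continuous χ ∧ ∀ x ∈ ((↑) '' S : Set G), χ x ∈ Tplus}) := by
        refine ⟨?_, ?_⟩
        · show Continuous fun x => (n • χ) x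
          simp only [AddMonoidHom.nsmul_apply]
          exact hχc.nsmul n
        · rintro _ ⟨s, _, rfl⟩
          simp only [AddMonoidHom.nsmul_apply, hχH _ s.2, smul_zero]
          exact hTplus0
      have := hg _ hmem
      simpa using this
    refine ⟨⟨g, hgH⟩, ?_, rfl⟩
    rintro χ ⟨hχc, hχS⟩
    obtain ⟨ψ, hψc, hψ⟩ := hde χ hχc
    have hmem : ψ ∈ ({χ : G →+ 𝕋 | Continuous χ ∧ ∀ x ∈ ((↑) '' S : Set G), χ x ∈ Tplus}) := by
      refine ⟨hψc, ?_⟩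
      rintro _ ⟨s, hs, rfl⟩
      rw [hψ]
      exact hχS _ hs
    have := hg _ hmem
    rwa [show ψ g = χ ⟨g, hgH⟩ from hψ ⟨g, hgH⟩] at this
end
end

section
/- If H is an open subgroup of an abelian topological group G, then H is dually closed in G: H equals the intersection of the kernels of all continuous characters of G that vanish on H. -/
open Filter Topology

noncomputable section

/-- The natural map `AddCircle (1:ℚ) →+ AddCircle (1:ℝ)`. -/
def ratToReal : AddCircle (1 : ℚ) →+ 𝕋 :=
  QuotientAddGroup.map _ _ (Rat.castHom ℝ).toAddMonoidHom (by
    intro q hq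
    simp only [AddSubgroup.mem_zmultiples_iff] at hq ⊢
    obtain ⟨n, hn⟩ := hq
    exact ⟨n, by show n • (1:ℝ) = (q:ℝ); rw [zsmul_one] at hn ⊢; exact_mod_cast hn⟩)

lemma ratToReal_ne_zero {x : AddCircle (1 : ℚ)} (hx : x ≠ 0) : ratToReal x ≠ 0 := by
  induction x using QuotientAddGroup.induction_on with
  | H q =>
    intro h
    apply hx
    have : ratToReal (q : AddCircle (1:ℚ)) = ((q : ℝ) : 𝕋) := rfl
    rw [this, AddCircle.coe_eq_zero_iff] at h
    rw [AddCircle.coe_eq_zero_iff]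
    obtain ⟨n, hn⟩ := h
    exact ⟨n, by rw [zsmul_one] at hn ⊢; exact_mod_cast hn⟩

/-- an open subgroup of an abelian topological group is dually closed. -/
theorem stmt3 {G : Type*} [AddCommGroup G] [TopologicalSpace G] [IsTopologicalAddGroup G]
    (H : AddSubgroup G) (hH : IsOpen (H : Set G)) :
    (H : Set G) =
      {x : G | ∀ χ : G →+ 𝕋, Continuous χ → (∀ h ∈ H, χ h = 0) → χ x = 0} := by
  ext x
  simp only [Set.mem_setOf_eq, SetLike.mem_coe]
  constructor
  · intro hx χ _ hχH
    exact hχH x hx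
  · intro hx
    by_contra hxH
    -- work in the quotient
    set π := QuotientAddGroup.mk' H
    have hπx : π x ≠ 0 := by
      simpa [π, QuotientAddGroup.eq_zero_iff] using hxH
    obtain ⟨c, hc⟩ := CharacterModule.exists_character_apply_ne_zero_of_ne_zero hπx
    set χ : G →+ 𝕋 := ratToReal.comp ((c : G ⧸ H →+ AddCircle (1:ℚ)).comp π) with hχ
    have hconst : ∀ y z : G, -y + z ∈ H → χ z = χ y := by
      intro y z hyz
      have : π z = π y := by
        rw [QuotientAddGroup.mk'_eq_mk' ]
        exact ⟨-(-y + z), H.neg_mem hyz, by abel⟩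
      show ratToReal (c (π z)) = ratToReal (c (π y)); rw [this]
    have hcont : Continuous χ := by
      apply IsLocallyConstant.continuous
      rw [IsLocallyConstant.iff_eventually_eq]
      intro y
      have hU : IsOpen {z : G | -y + z ∈ H} := hH.preimage (by continuity)
      have hyU : y ∈ {z : G | -y + z ∈ H} := by simpa using H.zero_mem
      filter_upwards [hU.mem_nhds hyU] with z hz using hconst y z hz
    have hvan : ∀ h ∈ H, χ h = 0 := by
      intro h hh
      have : π h = 0 := by simpa [π, QuotientAddGroup.eq_zero_iff] using hh
      show ratToReal (c (π h)) = 0; simp [this]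
    have := hx χ hcont hvan
    simp only [hχ, AddMonoidHom.comp_apply] at this
    exact ratToReal_ne_zero (by exact hc) this
end
end

section
/- If H is an open subgroup of an abelian topological group G, then H is dually embedded in G: every continuous character of H extends to a continuous character of G. -/
open Filter Topology

noncomputable section

/-- an open subgroup of an abelian topological group is dually embedded. -/
theorem stmt4 {G : Type*} [AddCommGroup G] [TopologicalSpace G] [IsTopologicalAddGroup G]
    (H : AddSubgroup G) (hH : IsOpen (H : Set G))
    (χ : ↥H →+ 𝕋) (hχ : Continuous χ) :
    ∃ ψ : G →+ 𝕋, Continuous ψ ∧ ∀ h : ↥H, ψ h = χ h := by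
  obtain ⟨ψ, hψ⟩ := (Module.Baer.of_divisible 𝕋).extension_property_addMonoidHom
    H.subtype Subtype.val_injective χ
  refine ⟨ψ, ?_, fun h => DFunLike.congr_fun hψ h⟩
  refine continuous_of_continuousAt_zero ψ ?_
  have he := hH.isOpenEmbedding_subtypeVal
  unfold ContinuousAt
  rw [map_zero, show (0 : G) = (((0 : ↥H) : ↥(H : Set G)) : G) from rfl, ← he.map_nhds_eq,
    tendsto_map'_iff]
  have h1 : Continuous fun x : ↥(H : Set G) => (⟨x.1, x.2⟩ : ↥H) :=
    continuous_induced_rng.mpr continuous_subtype_val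
  have h2 : (⇑ψ ∘ (Subtype.val : ↥(H : Set G) → G)) = fun x => χ ⟨x.1, x.2⟩ :=
    funext fun x => DFunLike.congr_fun hψ ⟨x.1, x.2⟩
  rw [h2]
  have := (hχ.comp h1).continuousAt (x := ((0 : ↥H) : ↥(H : Set G)))
  unfold ContinuousAt at this
  simp at this ⊢
  exact this
end
end

section
/- Let {q_n}_{n≥0} be a sequence of positive integers with q_n ≥ 8 for all n, and set b_n = q_0·q_1···q_n. Then the set X = {0} ∪ {±(1/b_n mod 1) | n ∈ ℕ} is quasi-convex in T = R/Z, i.e., X = X^▷◁. -/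
open Filter Topology

noncomputable section

lemma coe_int_eq_zero (z : ℤ) : ((z : ℝ) : 𝕋) = 0 := by
  rw [AddCircle.coe_eq_zero_iff]; exact ⟨z, by simp⟩

lemma coe_eq_coe_iff (r s : ℝ) : (r : 𝕋) = (s : 𝕋) ↔ ∃ z : ℤ, r - s = z := by
  constructor
  · intro h
    have : ((r - s : ℝ) : 𝕋) = 0 := by rw [AddCircle.coe_sub, h, sub_self]
    rw [AddCircle.coe_eq_zero_iff] at this
    obtain ⟨n, hn⟩ := this
    exact ⟨n, by simpa using hn.symm⟩
  · rintro ⟨z, hz⟩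
    have : ((r - s : ℝ) : 𝕋) = 0 := by rw [hz]; exact coe_int_eq_zero z
    rw [AddCircle.coe_sub] at this
    exact sub_eq_zero.mp this

lemma mem_Tplus_iff (r : ℝ) : (r : 𝕋) ∈ Tplus ↔ ∃ z : ℤ, |r - z| ≤ 1/4 := by
  constructor
  · rintro ⟨r', hr', heq⟩
    obtain ⟨z, hz⟩ := (coe_eq_coe_iff r' r).mp heq
    refine ⟨-z, ?_⟩
    have he : r - ((-z : ℤ):ℝ) = r' := by push_cast; linarith
    rw [he]; exact hr'
  · rintro ⟨z, hz⟩
    exact ⟨r - z, hz, by rw [coe_eq_coe_iff]; exact ⟨-z, by push_cast; ring⟩⟩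

lemma Tplus_neg {x : 𝕋} (h : x ∈ Tplus) : -x ∈ Tplus := by
  obtain ⟨r, hr, heq⟩ := h
  refine ⟨-r, by rwa [abs_neg], ?_⟩
  rw [← heq, ← AddCircle.coe_neg]

def chi (m : ℤ) : 𝕋 →+ 𝕋 := AddMonoidHom.mk' (fun x => m • x) (fun a b => smul_add m a b)

lemma chi_coe (m : ℤ) (r : ℝ) : chi m (r : 𝕋) = ((m * r : ℝ) : 𝕋) := by
  show m • (r : 𝕋) = _
  have : ((m • r : ℝ) : 𝕋) = m • (r : 𝕋) := AddCircle.coe_zsmul (1:ℝ)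
  rw [← this, zsmul_eq_mul]

lemma chi_mem_polar (b : ℕ → ℕ) (m : ℤ)
    (h : ∀ n : ℕ, ∃ z : ℤ, |(m : ℝ) * ((b n : ℝ))⁻¹ - z| ≤ 1/4) :
    chi m ∈ polar 𝕋 (Xset b) := by
  refine ⟨continuous_zsmul m, ?_⟩
  rintro x (hx | ⟨n, hn | hn⟩)
  · have hx0 : x = 0 := hx
    rw [hx0, map_zero]
    exact ⟨0, by norm_num, by norm_num⟩
  · rw [hn, chi_coe, mem_Tplus_iff]
    exact h n
  · rw [hn, map_neg]
    apply Tplus_neg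
    rw [chi_coe, mem_Tplus_iff]
    exact h n

section Aux

variable (q : ℕ → ℕ)

def Nprod : ℕ → ℕ := fun k => ∏ i ∈ Finset.range k, q i

lemma Nprod_succ (k : ℕ) : Nprod q (k+1) = Nprod q k * q k := Finset.prod_range_succ _ _

variable (hq : ∀ n, 8 ≤ q n)
include hq

lemma Nprod_pos (k : ℕ) : 0 < Nprod q k :=
  Finset.prod_pos (fun i _ => by have := hq i; omega)

lemma Ico_prod_one_le (a c : ℕ) : 1 ≤ ∏ i ∈ Finset.Ico a c, q i :=
  Finset.one_le_prod' (fun i _ => by have := hq i; omega)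

omit hq in lemma Nprod_split (a c : ℕ) (h : a ≤ c) :
    Nprod q c = Nprod q a * ∏ i ∈ Finset.Ico a c, q i :=
  (Finset.prod_range_mul_prod_Ico q h).symm

omit hq in lemma Nprod_dvd (a c : ℕ) (h : a ≤ c) : Nprod q a ∣ Nprod q c :=
  ⟨_, Nprod_split q a c h⟩

/-- If `lev > k` then `4*c ≤ q k` implies `4 * (c * N k) ≤ N lev`. -/
lemma nat_bound1 (k lev c : ℕ) (h : k < lev) (hc : 4*c ≤ q k) :
    4 * (c * Nprod q k) ≤ Nprod q lev := by
  rw [Nprod_split q k lev h.le, Finset.prod_eq_prod_Ico_succ_bot h]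
  have h1 : 1 ≤ ∏ i ∈ Finset.Ico (k+1) lev, q i := Ico_prod_one_le q hq _ _
  have h2 : 0 < Nprod q k := Nprod_pos q hq k
  calc 4 * (c * Nprod q k) = (4*c) * Nprod q k := by ring
  _ ≤ q k * Nprod q k := Nat.mul_le_mul_right _ hc
  _ = Nprod q k * (q k * 1) := by ring
  _ ≤ Nprod q k * (q k * ∏ i ∈ Finset.Ico (k+1) lev, q i) := by
      exact Nat.mul_le_mul_left _ (Nat.mul_le_mul_left _ h1)

/-- If `i < j < lev`, `4*c1 ≤ q i`, `4*c2 + 1 ≤ q j` then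
`4 * (c1 * N i + c2 * N j) ≤ N lev`. -/
lemma nat_bound2 (i j lev c1 c2 : ℕ) (hij : i < j) (hjl : j < lev)
    (hc1 : 4*c1 ≤ q i) (hc2 : 4*c2 + 1 ≤ q j) :
    4 * (c1 * Nprod q i + c2 * Nprod q j) ≤ Nprod q lev := by
  have hsplit1 : Nprod q j = Nprod q i * ∏ i_1 ∈ Finset.Ico i j, q i_1 :=
    Nprod_split q i j hij.le
  have hsplit2 : Nprod q lev = Nprod q j * ∏ i_1 ∈ Finset.Ico j lev, q i_1 :=
    Nprod_split q j lev hjl.le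
  have hIJ : q i ≤ ∏ i_1 ∈ Finset.Ico i j, q i_1 := by
    rw [Finset.prod_eq_prod_Ico_succ_bot hij]
    have := Ico_prod_one_le q hq (i+1) j
    calc q i = q i * 1 := by ring
    _ ≤ q i * ∏ i_1 ∈ Finset.Ico (i+1) j, q i_1 := Nat.mul_le_mul_left _ this
  have hJL : q j ≤ ∏ i_1 ∈ Finset.Ico j lev, q i_1 := by
    rw [Finset.prod_eq_prod_Ico_succ_bot hjl]
    have := Ico_prod_one_le q hq (j+1) lev
    calc q j = q j * 1 := by ring
    _ ≤ q j * ∏ i_1 ∈ Finset.Ico (j+1) lev, q i_1 := Nat.mul_le_mul_left _ this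
  set P := ∏ i_1 ∈ Finset.Ico i j, q i_1 with hP
  set R := ∏ i_1 ∈ Finset.Ico j lev, q i_1 with hR
  have hNi : 0 < Nprod q i := Nprod_pos q hq i
  -- goal : 4*(c1 * Ni + c2 * Ni * P) ≤ Ni * P * R
  rw [hsplit2, hsplit1]
  have h1 : 4*c1 ≤ P := le_trans hc1 hIJ
  have h2 : q j ≤ R := hJL
  calc 4 * (c1 * Nprod q i + c2 * (Nprod q i * P))
      = (4*c1) * Nprod q i + (4*c2) * (Nprod q i * P) := by ring
  _ ≤ P * Nprod q i + (q j - 1) * (Nprod q i * P) := by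
      have : 4*c2 ≤ q j - 1 := by omega
      exact Nat.add_le_add (Nat.mul_le_mul_right _ h1) (Nat.mul_le_mul_right _ this)
  _ = Nprod q i * P * (1 + (q j - 1)) := by ring
  _ = Nprod q i * P * q j := by
      have := hq j; congr 1; omega
  _ ≤ Nprod q i * P * R := Nat.mul_le_mul_left _ h2


omit hq in
-- division bound helper
omit hq in
lemma div_le_quarter {a b : ℕ} (h : 4 * a ≤ b) (hb : 0 < b) :
    (a : ℝ) * ((b : ℝ))⁻¹ ≤ 1/4 := by
  have hb' : (0:ℝ) < (b:ℝ) := by exact_mod_cast hb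
  rw [mul_inv_le_iff₀ hb']
  have : (4:ℝ) * a ≤ b := by exact_mod_cast h
  linarith

lemma pol1R (k c n : ℕ) (hc : 4*c ≤ q k) :
    ∃ z : ℤ, |((c * Nprod q k : ℕ):ℝ) * ((Nprod q (n+1) : ℕ):ℝ)⁻¹ - (z:ℝ)| ≤ 1/4 := by
  set lev := n + 1 with hlev
  have hpos : (0:ℝ) < ((Nprod q lev : ℕ):ℝ) := by exact_mod_cast Nprod_pos q hq lev
  rcases le_or_gt lev k with hle | hlt
  · obtain ⟨t, ht⟩ := Nprod_dvd q lev k hle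
    refine ⟨(c * t : ℕ), ?_⟩
    have : ((c * Nprod q k : ℕ):ℝ) = ((c*t : ℕ):ℝ) * ((Nprod q lev : ℕ):ℝ) := by
      push_cast [ht]; ring
    rw [this]
    field_simp
    norm_num
  · refine ⟨0, ?_⟩
    have h1 : (0:ℝ) ≤ ((c * Nprod q k : ℕ):ℝ) * ((Nprod q lev : ℕ):ℝ)⁻¹ := by positivity
    rw [Int.cast_zero, sub_zero, abs_of_nonneg h1]
    exact div_le_quarter (nat_bound1 q hq k lev c hlt hc) (Nprod_pos q hq lev)

lemma pol2R (i j c1 c2 : ℕ) (e1 e2 : ℤ) (hij : i < j)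
    (he1 : e1 = 1 ∨ e1 = -1) (he2 : e2 = 1 ∨ e2 = -1)
    (hc1 : 4*c1 ≤ q i) (hc2 : 4*c2 + 1 ≤ q j) (n : ℕ) :
    ∃ z : ℤ, |((e1*(c1 * Nprod q i) + e2*(c2 * Nprod q j) : ℤ):ℝ)
      * ((Nprod q (n+1) : ℕ):ℝ)⁻¹ - (z:ℝ)| ≤ 1/4 := by
  set lev := n + 1 with hlev
  have hpos : (0:ℝ) < ((Nprod q lev : ℕ):ℝ) := by exact_mod_cast Nprod_pos q hq lev
  have he1' : |(e1:ℝ)| = 1 := by rcases he1 with h | h <;> simp [h]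
  have he2' : |(e2:ℝ)| = 1 := by rcases he2 with h | h <;> simp [h]
  rcases le_or_gt lev i with hle | hlt
  · obtain ⟨t1, ht1⟩ := Nprod_dvd q lev i hle
    obtain ⟨t2, ht2⟩ := Nprod_dvd q lev j (le_trans hle hij.le)
    refine ⟨e1*(c1*t1) + e2*(c2*t2), ?_⟩
    have : ((e1*(c1 * Nprod q i) + e2*(c2 * Nprod q j) : ℤ):ℝ)
        = ((e1*(c1*t1) + e2*(c2*t2) : ℤ):ℝ) * ((Nprod q lev : ℕ):ℝ) := by
      push_cast [ht1, ht2]; ring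
    rw [this]
    field_simp
    norm_num
  · rcases le_or_gt lev j with hlej | hltj
    · obtain ⟨t2, ht2⟩ := Nprod_dvd q lev j hlej
      refine ⟨e2*(c2*t2), ?_⟩
      have heq : ((e1*(c1 * Nprod q i) + e2*(c2 * Nprod q j) : ℤ):ℝ)
          * ((Nprod q lev : ℕ):ℝ)⁻¹ - ((e2*(c2*t2) : ℤ):ℝ)
          = (e1:ℝ) * (((c1 * Nprod q i : ℕ):ℝ) * ((Nprod q lev : ℕ):ℝ)⁻¹) := by
        push_cast [ht2]
        field_simp
        ring
      rw [heq, abs_mul, he1', one_mul]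
      have h1 : (0:ℝ) ≤ ((c1 * Nprod q i : ℕ):ℝ) * ((Nprod q lev : ℕ):ℝ)⁻¹ := by positivity
      rw [abs_of_nonneg h1]
      exact div_le_quarter (nat_bound1 q hq i lev c1 hlt hc1) (Nprod_pos q hq lev)
    · refine ⟨0, ?_⟩
      rw [Int.cast_zero, sub_zero, abs_mul]
      have habs : |((e1*(c1 * Nprod q i) + e2*(c2 * Nprod q j) : ℤ):ℝ)|
          ≤ ((c1 * Nprod q i + c2 * Nprod q j : ℕ):ℝ) := by
        push_cast
        calc |(e1:ℝ)*(c1 * Nprod q i) + (e2:ℝ)*(c2 * Nprod q j)|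
            ≤ |(e1:ℝ)*(c1 * Nprod q i)| + |(e2:ℝ)*(c2 * Nprod q j)| := abs_add_le _ _
        _ = (c1:ℝ) * Nprod q i + (c2:ℝ) * Nprod q j := by
            rw [abs_mul (e1:ℝ), abs_mul (e2:ℝ), he1', he2', one_mul, one_mul,
              abs_of_nonneg (by positivity : (0:ℝ) ≤ (c1:ℝ) * Nprod q i),
              abs_of_nonneg (by positivity : (0:ℝ) ≤ (c2:ℝ) * Nprod q j)]
      have h2 : |((Nprod q lev : ℕ):ℝ)⁻¹| = ((Nprod q lev : ℕ):ℝ)⁻¹ :=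
        abs_of_nonneg (by positivity)
      rw [h2]
      calc |((e1*(c1 * Nprod q i) + e2*(c2 * Nprod q j) : ℤ):ℝ)| * ((Nprod q lev : ℕ):ℝ)⁻¹
          ≤ ((c1 * Nprod q i + c2 * Nprod q j : ℕ):ℝ) * ((Nprod q lev : ℕ):ℝ)⁻¹ := by
            apply mul_le_mul_of_nonneg_right habs (by positivity)
      _ ≤ 1/4 := div_le_quarter (nat_bound2 q hq i j lev c1 c2 hij hltj hc1 hc2)
            (Nprod_pos q hq lev)
end Aux

lemma round_min (x : ℝ) (z : ℤ) : |x - round x| ≤ |x - z| := by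
  by_cases h : z = round x
  · rw [h]
  · have h1 : (1:ℝ) ≤ |(z : ℝ) - round x| := by
      have h0 : (1:ℤ) ≤ |z - round x| := by
        rcases abs_cases (z - round x) with ⟨he, _⟩ | ⟨he, _⟩ <;> omega
      calc (1:ℝ) = ((1:ℤ):ℝ) := by norm_num
      _ ≤ |((z - round x : ℤ) : ℝ)| := by rw [← Int.cast_abs]; exact_mod_cast h0
      _ = |(z:ℝ) - round x| := by push_cast; ring_nf
    have h2 := abs_sub_round x
    have h3 : |(z:ℝ) - round x| ≤ |x - z| + |x - round x| := by
      calc |(z:ℝ) - round x| = |(x - round x) - (x - z)| := by ring_nf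
      _ ≤ |x - round x| + |x - z| := abs_sub _ _
      _ = |x - z| + |x - round x| := by ring
    linarith

section Main

variable (q : ℕ → ℕ) (r : ℝ)

/-- `A k` : the nearest integer to `N k * r`. -/
def AA : ℕ → ℤ := fun k => round (((Nprod q k : ℕ):ℝ) * r)

/-- `t k` : the distance from `N k * r` to the nearest integer. -/
def tt : ℕ → ℝ := fun k => |((Nprod q k : ℕ):ℝ) * r - AA q r k|

/-- the digits -/
def dd : ℕ → ℤ := fun k => AA q r (k+1) - q k * AA q r k

lemma tt_nonneg (k : ℕ) : 0 ≤ tt q r k := abs_nonneg _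

variable (hq : ∀ n, 8 ≤ q n)
variable (H : ∀ m : ℤ, (∀ n : ℕ, ∃ z : ℤ, |(m:ℝ) * ((Nprod q (n+1) : ℕ):ℝ)⁻¹ - (z:ℝ)| ≤ 1/4) →
      ∃ z : ℤ, |(m:ℝ) * r - (z:ℝ)| ≤ 1/4)
include hq H

lemma T1 : ∀ (k : ℕ) (c : ℕ), 1 ≤ c → 4*c ≤ q k → (c:ℝ) * tt q r k ≤ 1/4 := by
  intro k c
  induction c with
  | zero => omega
  | succ c ih =>
    intro _ hc4
    rcases Nat.eq_zero_or_pos c with hc0 | hc1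
    · -- base case : c + 1 = 1
      subst hc0
      obtain ⟨z, hz⟩ := H ((1 * Nprod q k : ℕ) : ℤ) (fun n => pol1R q hq k 1 n (by omega))
      have : tt q r k ≤ |((Nprod q k : ℕ):ℝ) * r - (z:ℝ)| := round_min _ z
      have he : |((Nprod q k : ℕ):ℝ) * r - (z:ℝ)|
          = |(((1 * Nprod q k : ℕ):ℤ):ℝ) * r - (z:ℝ)| := by push_cast; ring_nf
      rw [he] at this
      push_cast
      linarith
    · have hct : (c:ℝ) * tt q r k ≤ 1/4 := ih hc1 (by omega)
      have htk : tt q r k ≤ 1/4 := by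
        have h1 : (1:ℝ) ≤ (c:ℝ) := by exact_mod_cast hc1
        nlinarith [tt_nonneg q r k]
      obtain ⟨z, hz⟩ := H (((c+1) * Nprod q k : ℕ) : ℤ)
        (fun n => pol1R q hq k (c+1) n (by omega))
      have hcast : ((((c+1) * Nprod q k : ℕ):ℤ):ℝ) = ((c:ℝ)+1) * ((Nprod q k : ℕ):ℝ) := by
        push_cast; ring
      rw [hcast] at hz
      set x : ℝ := ((Nprod q k : ℕ):ℝ) * r with hx
      have hAd : |((c:ℝ)+1) * x - ((c:ℝ)+1) * (AA q r k : ℝ)| ≤ 1/2 := by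
        have : |((c:ℝ)+1) * x - ((c:ℝ)+1) * (AA q r k : ℝ)| = ((c:ℝ)+1) * tt q r k := by
          rw [show ((c:ℝ)+1) * x - ((c:ℝ)+1) * (AA q r k : ℝ)
              = ((c:ℝ)+1) * (x - (AA q r k : ℝ)) by ring, abs_mul,
            abs_of_nonneg (by positivity : (0:ℝ) ≤ (c:ℝ)+1)]
          rfl
        rw [this]; push_cast; linarith
      have hz' : |((c:ℝ)+1) * x - (z:ℝ)| ≤ 1/4 := by
        convert hz using 2; ring
      have hzz : z = (c+1) * AA q r k := by
        have habs : |((z - (c+1) * AA q r k : ℤ) : ℝ)| < 1 := by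
          push_cast
          calc |(z:ℝ) - ((c:ℝ)+1) * (AA q r k : ℝ)|
              = |(((c:ℝ)+1) * x - ((c:ℝ)+1) * (AA q r k : ℝ)) - (((c:ℝ)+1) * x - (z:ℝ))| := by
                ring_nf
          _ ≤ |((c:ℝ)+1) * x - ((c:ℝ)+1) * (AA q r k : ℝ)| + |((c:ℝ)+1) * x - (z:ℝ)| :=
                abs_sub _ _
          _ < 1 := by linarith
        rw [← Int.cast_abs] at habs
        have h5 : |z - (c+1) * AA q r k| < 1 := by exact_mod_cast habs
        rcases abs_cases (z - (c+1) * AA q r k) with ⟨he, _⟩ | ⟨he, _⟩ <;> omega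
      have : ((c:ℝ)+1) * tt q r k = |((c:ℝ)+1) * x - (z:ℝ)| := by
        rw [hzz]
        push_cast
        rw [show ((c:ℝ)+1) * x - (((c:ℝ)+1) * (AA q r k : ℝ))
            = ((c:ℝ)+1) * (x - (AA q r k : ℝ)) by ring, abs_mul,
          abs_of_nonneg (by positivity : (0:ℝ) ≤ (c:ℝ)+1)]
        rfl
      push_cast
      linarith [hz', this]

lemma t8 (k : ℕ) : tt q r k ≤ 1/8 := by
  have := T1 q r hq H k 2 (by norm_num) (by have := hq k; omega)
  push_cast at this
  linarith

lemma Tq (k : ℕ) : (q k : ℝ) * tt q r k ≤ 11/8 := by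
  have h1 := T1 q r hq H k (q k / 4) (by have := hq k; omega) (by have := hq k; omega)
  have h2 : 2 * q k ≤ 11 * (q k / 4) := by have := hq k; omega
  have h2' : 2 * (q k : ℝ) ≤ 11 * ((q k / 4 : ℕ):ℝ) := by exact_mod_cast h2
  nlinarith [tt_nonneg q r k]

lemma dd_le_one (k : ℕ) : dd q r k = 0 ∨ dd q r k = 1 ∨ dd q r k = -1 := by
  have hN : ((Nprod q (k+1) : ℕ):ℝ) = ((Nprod q k : ℕ):ℝ) * (q k : ℝ) := by
    rw [Nprod_succ]; push_cast; ring
  have hd : ((dd q r k : ℤ):ℝ)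
      = (q k : ℝ) * (((Nprod q k : ℕ):ℝ) * r - (AA q r k : ℝ))
        - (((Nprod q (k+1) : ℕ):ℝ) * r - (AA q r (k+1) : ℝ)) := by
    show (((AA q r (k+1) - q k * AA q r k : ℤ)):ℝ) = _
    push_cast
    rw [hN]; ring
  have h1 : |((dd q r k : ℤ):ℝ)| ≤ 3/2 := by
    rw [hd]
    calc |(q k : ℝ) * (((Nprod q k : ℕ):ℝ) * r - (AA q r k : ℝ))
        - (((Nprod q (k+1) : ℕ):ℝ) * r - (AA q r (k+1) : ℝ))|
        ≤ |(q k : ℝ) * (((Nprod q k : ℕ):ℝ) * r - (AA q r k : ℝ))|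
          + |((Nprod q (k+1) : ℕ):ℝ) * r - (AA q r (k+1) : ℝ)| := abs_sub _ _
    _ ≤ 11/8 + 1/8 := by
        have e1 : |(q k : ℝ) * (((Nprod q k : ℕ):ℝ) * r - (AA q r k : ℝ))|
            = (q k : ℝ) * tt q r k := by
          rw [abs_mul, abs_of_nonneg (by positivity : (0:ℝ) ≤ (q k:ℝ))]; rfl
        have e2 : |((Nprod q (k+1) : ℕ):ℝ) * r - (AA q r (k+1) : ℝ)| = tt q r (k+1) := rfl
        rw [e1, e2]
        have := Tq q r hq H k
        have := t8 q r hq H (k+1)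
        linarith
    _ = 3/2 := by norm_num
  have h2 : |dd q r k| ≤ 1 := by
    have : ((|dd q r k| : ℤ):ℝ) ≤ 3/2 := by rw [Int.cast_abs]; exact h1
    by_contra hcon
    have h3 : (2:ℤ) ≤ |dd q r k| := by
      rcases abs_cases (dd q r k) with ⟨he, _⟩ | ⟨he, _⟩ <;> omega
    have : (2:ℝ) ≤ ((|dd q r k| : ℤ):ℝ) := by exact_mod_cast h3
    linarith
  rcases abs_cases (dd q r k) with ⟨he, _⟩ | ⟨he, _⟩ <;> omega

omit hq H in
lemma theta_rec (k : ℕ) :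
    (q k : ℝ) * (((Nprod q k : ℕ):ℝ) * r - (AA q r k : ℝ))
      = (((Nprod q (k+1) : ℕ):ℝ) * r - (AA q r (k+1) : ℝ)) + ((dd q r k : ℤ):ℝ) := by
  have hN : ((Nprod q (k+1) : ℕ):ℝ) = ((Nprod q k : ℕ):ℝ) * (q k : ℝ) := by
    rw [Nprod_succ]; push_cast; ring
  show _ = _ + (((AA q r (k+1) - q k * AA q r k : ℤ)):ℝ)
  push_cast
  rw [hN]; ring

lemma stable (K : ℕ) (h : ∀ k, K ≤ k → dd q r k = 0) :
    ((Nprod q K : ℕ):ℝ) * r = (AA q r K : ℝ) := by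
  have key : ∀ j : ℕ, ((Nprod q (K+j) : ℕ):ℝ) * r - (AA q r (K+j) : ℝ)
      = (((Nprod q (K+j) / Nprod q K : ℕ)):ℝ)
        * (((Nprod q K : ℕ):ℝ) * r - (AA q r K : ℝ)) := by
    intro j
    induction j with
    | zero =>
      simp [Nat.div_self (Nprod_pos q hq K)]
    | succ j ih =>
      have hA : AA q r (K+j+1) = q (K+j) * AA q r (K+j) := by
        have := h (K+j) (by omega)
        have hd : dd q r (K+j) = AA q r (K+j+1) - q (K+j) * AA q r (K+j) := rfl
        omega
      have hN : ((Nprod q (K+j+1) : ℕ):ℝ) = ((Nprod q (K+j) : ℕ):ℝ) * (q (K+j) : ℝ) := by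
        rw [show K+j+1 = (K+j)+1 by ring, Nprod_succ]; push_cast; ring
      have hdiv : (Nprod q (K+(j+1)) / Nprod q K : ℕ)
          = (Nprod q (K+j) / Nprod q K) * q (K+j) := by
        obtain ⟨t, ht⟩ := Nprod_dvd q K (K+j) (by omega)
        have hNp : Nprod q (K+(j+1)) = Nprod q (K+j) * q (K+j) := by
          rw [show K+(j+1) = (K+j)+1 by ring, Nprod_succ]
        have hKpos := Nprod_pos q hq K
        rw [hNp, ht, Nat.mul_div_cancel_left t hKpos, mul_assoc,
          Nat.mul_div_cancel_left _ hKpos]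
      calc ((Nprod q (K+(j+1)) : ℕ):ℝ) * r - (AA q r (K+(j+1)) : ℝ)
          = (q (K+j) : ℝ) * (((Nprod q (K+j) : ℕ):ℝ) * r - (AA q r (K+j) : ℝ)) := by
            rw [show K+(j+1) = (K+j)+1 by ring, hN, hA]; push_cast; ring
      _ = (q (K+j) : ℝ) * ((((Nprod q (K+j) / Nprod q K : ℕ)):ℝ)
            * (((Nprod q K : ℕ):ℝ) * r - (AA q r K : ℝ))) := by rw [ih]
      _ = _ := by rw [hdiv]; push_cast; ring
  set x := ((Nprod q K : ℕ):ℝ) * r - (AA q r K : ℝ) with hx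
  have hbound : ∀ j : ℕ, (8:ℝ)^j * |x| ≤ 1/8 := by
    intro j
    have h1 := t8 q r hq H (K+j)
    have h2 : tt q r (K+j) = (((Nprod q (K+j) / Nprod q K : ℕ)):ℝ) * |x| := by
      show |((Nprod q (K+j) : ℕ):ℝ) * r - (AA q r (K+j) : ℝ)| = _
      rw [key j, abs_mul, abs_of_nonneg (by positivity : (0:ℝ) ≤ (((Nprod q (K+j) / Nprod q K : ℕ)):ℝ))]
    have h3 : (8:ℕ)^j ≤ Nprod q (K+j) / Nprod q K := by
      obtain ⟨t, ht⟩ := Nprod_dvd q K (K+j) (by omega)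
      have hKpos := Nprod_pos q hq K
      rw [ht, Nat.mul_div_cancel_left t hKpos]
      have : Nprod q (K+j) = Nprod q K * ∏ i ∈ Finset.Ico K (K+j), q i :=
        Nprod_split q K (K+j) (by omega)
      have ht' : t = ∏ i ∈ Finset.Ico K (K+j), q i := by
        rw [this] at ht
        exact Nat.eq_of_mul_eq_mul_left hKpos (by omega)
      rw [ht']
      calc (8:ℕ)^j = 8^(Finset.Ico K (K+j)).card := by rw [Nat.card_Ico]; congr 1; omega
      _ ≤ ∏ i ∈ Finset.Ico K (K+j), q i :=
          Finset.pow_card_le_prod _ _ _ (fun i _ => hq i)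
    have h3' : ((8:ℝ))^j ≤ (((Nprod q (K+j) / Nprod q K : ℕ)):ℝ) := by
      exact_mod_cast h3
    calc (8:ℝ)^j * |x| ≤ (((Nprod q (K+j) / Nprod q K : ℕ)):ℝ) * |x| :=
          mul_le_mul_of_nonneg_right h3' (abs_nonneg x)
    _ = tt q r (K+j) := h2.symm
    _ ≤ 1/8 := h1
  have hzero : |x| = 0 := by
    by_contra hne
    have hpos : 0 < |x| := lt_of_le_of_ne (abs_nonneg x) (Ne.symm hne)
    obtain ⟨j, hj⟩ := pow_unbounded_of_one_lt (1/(8 * |x|)) (by norm_num : (1:ℝ) < 8)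
    have := hbound j
    have h8 : (0:ℝ) < (8:ℝ)^j := by positivity
    rw [div_lt_iff₀ (by positivity)] at hj
    nlinarith
  have := abs_eq_zero.mp hzero
  linarith [sub_eq_zero.mp this]

set_option maxHeartbeats 2000000 in
lemma uniq (i j : ℕ) (hij : i < j) (hdi : dd q r i ≠ 0) (hdj : dd q r j ≠ 0) : False := by
  have hdi1 : dd q r i = 1 ∨ dd q r i = -1 := by
    rcases dd_le_one q r hq H i with h | h | h <;> tauto
  have hdj1 : dd q r j = 1 ∨ dd q r j = -1 := by
    rcases dd_le_one q r hq H j with h | h | h <;> tauto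
  set e1 := dd q r i with he1def
  set e2 := dd q r j with he2def
  set C1 := q i / 4 with hC1
  set C2 := (q j - 1) / 4 with hC2
  have hqi := hq i
  have hqj := hq j
  have hc1 : 4 * C1 ≤ q i := by omega
  have hc2 : 4 * C2 + 1 ≤ q j := by omega
  have h11 : 2 * q i ≤ 11 * C1 := by omega
  have h8 : q j ≤ 8 * C2 := by omega
  set m : ℤ := e1 * (C1 * Nprod q i) + e2 * (C2 * Nprod q j) with hm
  obtain ⟨z, hz⟩ := H m (fun n => pol2R q hq i j C1 C2 e1 e2 hij hdi1 hdj1 hc1 hc2 n)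
  -- θ values
  set θi := ((Nprod q i : ℕ):ℝ) * r - (AA q r i : ℝ) with hθi
  set θj := ((Nprod q j : ℕ):ℝ) * r - (AA q r j : ℝ) with hθj
  set θi' := ((Nprod q (i+1) : ℕ):ℝ) * r - (AA q r (i+1) : ℝ) with hθi'
  set θj' := ((Nprod q (j+1) : ℕ):ℝ) * r - (AA q r (j+1) : ℝ) with hθj'
  have hreci : (q i : ℝ) * θi = θi' + ((e1:ℤ):ℝ) := theta_rec q r i
  have hrecj : (q j : ℝ) * θj = θj' + ((e2:ℤ):ℝ) := theta_rec q r j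
  have hti' : |θi'| ≤ 1/8 := t8 q r hq H (i+1)
  have htj' : |θj'| ≤ 1/8 := t8 q r hq H (j+1)
  have habsi := abs_le.mp hti'
  have habsj := abs_le.mp htj'
  clear_value e1 e2 θi θj θi' θj'
  have hqipos : (0:ℝ) < (q i : ℝ) := by exact_mod_cast (by omega : 0 < q i)
  have hqjpos : (0:ℝ) < (q j : ℝ) := by exact_mod_cast (by omega : 0 < q j)
  have hC1r : 2 * (q i : ℝ) ≤ 11 * ((C1:ℕ):ℝ) := by exact_mod_cast h11
  have hC1r' : 4 * ((C1:ℕ):ℝ) ≤ (q i : ℝ) := by exact_mod_cast hc1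
  have hC2r : (q j : ℝ) ≤ 8 * ((C2:ℕ):ℝ) := by exact_mod_cast h8
  have hC2r' : 4 * ((C2:ℕ):ℝ) + 1 ≤ (q j : ℝ) := by exact_mod_cast hc2
  -- bounds on q i * (e1 * θi)
  have hqe1 : 7/8 ≤ (q i : ℝ) * ((e1:ℝ) * θi) ∧ (q i : ℝ) * ((e1:ℝ) * θi) ≤ 9/8 := by
    have : (q i : ℝ) * ((e1:ℝ) * θi) = (e1:ℝ) * θi' + (e1:ℝ) * (e1:ℝ) := by
      rw [show (q i : ℝ) * ((e1:ℝ) * θi) = (e1:ℝ) * ((q i : ℝ) * θi) by ring, hreci]; ring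
    rcases hdi1 with h | h <;> rw [h] at this ⊢ <;> push_cast at this ⊢ <;>
      constructor <;> nlinarith [habsi.1, habsi.2]
  have hqe2 : 7/8 ≤ (q j : ℝ) * ((e2:ℝ) * θj) ∧ (q j : ℝ) * ((e2:ℝ) * θj) ≤ 9/8 := by
    have : (q j : ℝ) * ((e2:ℝ) * θj) = (e2:ℝ) * θj' + (e2:ℝ) * (e2:ℝ) := by
      rw [show (q j : ℝ) * ((e2:ℝ) * θj) = (e2:ℝ) * ((q j : ℝ) * θj) by ring, hrecj]; ring
    rcases hdj1 with h | h <;> rw [h] at this ⊢ <;> push_cast at this ⊢ <;>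
      constructor <;> nlinarith [habsj.1, habsj.2]
  have heθi_pos : 0 ≤ (e1:ℝ) * θi := by
    by_contra hcon
    push_neg at hcon
    have h9 := mul_neg_of_pos_of_neg hqipos hcon
    linarith only [hqe1.1, h9]
  have heθj_pos : 0 ≤ (e2:ℝ) * θj := by
    by_contra hcon
    push_neg at hcon
    have h9 := mul_neg_of_pos_of_neg hqjpos hcon
    linarith only [hqe2.1, h9]
  set s : ℝ := ((C1:ℕ):ℝ) * ((e1:ℝ) * θi) + ((C2:ℕ):ℝ) * ((e2:ℝ) * θj) with hs
  have hs_lower : 7/44 + 7/64 ≤ s := by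
    have l1 := mul_le_mul_of_nonneg_right hC1r heθi_pos
    have l2 := mul_le_mul_of_nonneg_right hC2r heθj_pos
    have g1 := hqe1.1
    have g2 := hqe2.1
    rw [hs]
    linarith only [l1, l2, g1, g2]
  have hs_upper : s ≤ 9/16 := by
    have l1 := mul_le_mul_of_nonneg_right hC1r' heθi_pos
    have l2 := mul_le_mul_of_nonneg_right hC2r' heθj_pos
    have g1 := hqe1.2
    have g2 := hqe2.2
    rw [hs]
    linarith only [l1, l2, g1, g2, heθi_pos, heθj_pos]
  -- m * r = W + s
  set W : ℤ := e1 * (C1 * AA q r i) + e2 * (C2 * AA q r j) with hW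
  have hmr : (m:ℝ) * r - (W:ℝ) = s := by
    rw [hm, hW, hs, hθi, hθj]
    push_cast
    ring
  set w : ℤ := z - W with hw
  have hzw : |s - (w:ℝ)| ≤ 1/4 := by
    have : s - (w:ℝ) = (m:ℝ) * r - (z:ℝ) := by rw [← hmr, hw]; push_cast; ring
    rw [this]; exact hz
  clear_value s m W w
  rcases le_or_gt w 0 with hw0 | hw1
  · have : (w:ℝ) ≤ 0 := by exact_mod_cast hw0
    have := abs_le.mp hzw
    linarith
  · have : (1:ℝ) ≤ (w:ℝ) := by exact_mod_cast hw1
    have := abs_le.mp hzw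
    linarith

end Main

lemma main_real (q : ℕ → ℕ) (hq : ∀ n, 8 ≤ q n) (b : ℕ → ℕ)
    (hb : ∀ n, b n = ∏ i ∈ Finset.range (n+1), q i) (r : ℝ)
    (H : ∀ m : ℤ, (∀ n : ℕ, ∃ z : ℤ, |(m:ℝ) * ((b n:ℝ))⁻¹ - z| ≤ 1/4) →
      ∃ z : ℤ, |(m:ℝ) * r - z| ≤ 1/4) :
    (∃ z : ℤ, r = z) ∨
      ∃ n : ℕ, (∃ z : ℤ, r - ((b n:ℝ))⁻¹ = z) ∨ (∃ z : ℤ, r + ((b n:ℝ))⁻¹ = z) := by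
  classical
  have hbN : ∀ n, b n = Nprod q (n+1) := by intro n; rw [hb n]; rfl
  have H' : ∀ m : ℤ, (∀ n : ℕ, ∃ z : ℤ, |(m:ℝ) * ((Nprod q (n+1) : ℕ):ℝ)⁻¹ - (z:ℝ)| ≤ 1/4) →
      ∃ z : ℤ, |(m:ℝ) * r - (z:ℝ)| ≤ 1/4 := by
    intro m hm
    apply H m
    intro n
    rw [hbN n]
    exact hm n
  by_cases hex : ∃ k, dd q r k ≠ 0
  · obtain ⟨i, hi⟩ := hex
    have honly : ∀ k, k ≠ i → dd q r k = 0 := by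
      intro k hk
      by_contra hkne
      rcases lt_or_gt_of_ne hk with h | h
      · exact uniq q r hq H' k i h hkne hi
      · exact uniq q r hq H' i k h hi hkne
    have hAbelow : ∀ k, k ≤ i → AA q r k = AA q r 0 * (Nprod q k : ℤ) := by
      intro k
      induction k with
      | zero => intro _; simp [Nprod]
      | succ k ih =>
        intro hk
        have hdk : dd q r k = 0 := honly k (by omega)
        have hstep : AA q r (k+1) = q k * AA q r k := by
          have hdef : dd q r k = AA q r (k+1) - q k * AA q r k := rfl
          omega
        rw [hstep, ih (by omega), Nprod_succ]
        push_cast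
        ring
    have hstab := stable q r hq H' (i+1) (fun k hk => honly k (by omega))
    have hAi1 : (AA q r (i+1) : ℤ) = AA q r 0 * (Nprod q (i+1) : ℤ) + dd q r i := by
      have h2 := hAbelow i le_rfl
      have h3 : ((Nprod q (i+1) : ℕ) : ℤ) = ((Nprod q i : ℕ) : ℤ) * (q i : ℤ) := by
        rw [Nprod_succ]; push_cast; ring
      have h1 : dd q r i = AA q r (i+1) - q i * AA q r i := rfl
      rw [h3, h1, h2]; ring
    set β : ℝ := ((Nprod q (i+1) : ℕ):ℝ) with hβdef
    have hβpos : (0:ℝ) < β := by rw [hβdef]; exact_mod_cast Nprod_pos q hq (i+1)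
    have hβ : β ≠ 0 := ne_of_gt hβpos
    have hβr : β * r = (AA q r 0 : ℝ) * β + (dd q r i : ℝ) := by
      rw [hstab, hβdef]
      exact_mod_cast hAi1
    have hrr : r = (AA q r 0 : ℝ) + (dd q r i : ℝ) * β⁻¹ := by
      have h5 : β * r = β * ((AA q r 0 : ℝ) + (dd q r i : ℝ) * β⁻¹) := by
        rw [hβr]
        field_simp
        try ring
      exact mul_left_cancel₀ hβ h5
    clear_value β
    have hd1 : dd q r i = 1 ∨ dd q r i = -1 := by
      rcases dd_le_one q r hq H' i with h | h | h <;> tauto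
    right
    refine ⟨i, ?_⟩
    have hbβ : ((b i : ℕ):ℝ) = β := by rw [hbN i, hβdef]
    rcases hd1 with h | h
    · left
      refine ⟨AA q r 0, ?_⟩
      have hdr : ((dd q r i : ℤ) : ℝ) = 1 := by rw [h]; norm_num
      rw [hdr] at hrr
      rw [hbβ]
      linarith [hrr]
    · right
      refine ⟨AA q r 0, ?_⟩
      have hdr : ((dd q r i : ℤ) : ℝ) = -1 := by rw [h]; norm_num
      rw [hdr] at hrr
      rw [hbβ]
      linarith [hrr]
  · push_neg at hex
    have hstab := stable q r hq H' 0 (fun k _ => hex k)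
    have h1 : ((Nprod q 0 : ℕ):ℝ) = 1 := by simp [Nprod]
    rw [h1, one_mul] at hstab
    exact Or.inl ⟨AA q r 0, hstab⟩


/-- Theorem 8T: if `q_n ≥ 8` for all `n` and `b_n = q_0 ⋯ q_n`,
then `X = {0} ∪ {±1/b_n}` is quasi-convex in `𝕋`. -/
theorem stmt10 (q : ℕ → ℕ) (hq : ∀ n, 8 ≤ q n)
    (b : ℕ → ℕ) (hb : ∀ n, b n = ∏ i ∈ Finset.range (n + 1), q i) :
    qcHull 𝕋 (Xset b) = Xset b := by
  ext y
  constructor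
  · intro hy
    obtain ⟨r, rfl⟩ : ∃ r : ℝ, (r : 𝕋) = y := Quotient.exists_rep y
    have H : ∀ m : ℤ, (∀ n : ℕ, ∃ z : ℤ, |(m:ℝ) * ((b n:ℝ))⁻¹ - z| ≤ 1/4) →
        ∃ z : ℤ, |(m:ℝ) * r - z| ≤ 1/4 := by
      intro m hm
      have := hy (chi m) (chi_mem_polar b m hm)
      rw [chi_coe, mem_Tplus_iff] at this
      exact this
    rcases main_real q hq b hb r H with ⟨z, hz⟩ | ⟨n, ⟨z, hz⟩ | ⟨z, hz⟩⟩
    · left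
      show (r : 𝕋) = 0
      rw [hz]; exact coe_int_eq_zero z
    · right
      exact ⟨n, Or.inl ((coe_eq_coe_iff _ _).mpr ⟨z, hz⟩)⟩
    · right
      refine ⟨n, Or.inr ?_⟩
      rw [← AddCircle.coe_neg]
      exact (coe_eq_coe_iff _ _).mpr ⟨z, by push_cast; linarith⟩
  · intro hx χ hχ
    exact hχ.2 _ hx
end
end

section
/- Let {q_n} be positive integers with b_n = q_0···q_n, and X = {0} ∪ {±(1/b_n mod 1) | n ∈ ℕ} ⊆ T. Suppose q_k ≥ 4. Then for every m with 1 ≤ m ≤ [q_k/4] (where [x] = max{n ∈ ℤ | n ≤ x}), the character η of T given by η(t) = m·b_{k-1}·t (with b_{-1} = 1) satisfies η(X) ⊆ T₊. If additionally q_{k+1} ≥ 4, then the character t ↦ (q_k − 1)·b_{k-1}·t also maps X into T₊. -/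
open Filter Topology

noncomputable section

lemma intcoe_zero (j : ℤ) : (((j:ℝ)) : 𝕋) = 0 := by
  rw [AddCircle.coe_eq_zero_iff]; exact ⟨j, by simp⟩

lemma mem_Tplus_rat (c : ℤ) (b : ℕ) (j : ℤ)
    (h : |(c : ℝ)/(b:ℝ) - j| ≤ 1/4) :
    c • ((((b:ℝ)⁻¹ : ℝ)) : 𝕋) ∈ Tplus := by
  refine ⟨(c:ℝ)/b - j, h, ?_⟩
  have h1 : ((((c:ℝ)/b - j : ℝ)) : 𝕋) = (((c:ℝ)/b - j : ℝ) : 𝕋) := rfl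
  have : c • ((((b:ℝ)⁻¹ : ℝ)) : 𝕋) = (((c • (b:ℝ)⁻¹ : ℝ)) : 𝕋) := rfl
  rw [this]
  have h2 : ((c:ℝ)/b - j : ℝ) + (j : ℝ) = (c • (b:ℝ)⁻¹ : ℝ) := by
    rw [zsmul_eq_mul]; push_cast; ring
  calc (((c:ℝ)/b - j : ℝ) : 𝕋) = (((c:ℝ)/b - j : ℝ) : 𝕋) + (((j:ℝ)) : 𝕋) := by
        rw [intcoe_zero, add_zero]
    _ = (((c • (b:ℝ)⁻¹ : ℝ)) : 𝕋) := by rw [← h2]; rfl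

/-- the characters `m·η_k` (`1 ≤ m ≤ [q_k/4]`) lie in `X^▷`,
and if moreover `q_{k+1} ≥ 4`, so does `(q_k - 1)·η_k`.
Here `B k = b_{k-1}` (with `b_{-1} = 1`) and `η_k(t) = b_{k-1}·t`. -/
theorem stmt11 (q : ℕ → ℕ) (hq : ∀ n, 0 < q n)
    (B : ℕ → ℕ) (hB0 : B 0 = 1) (hB : ∀ n, B (n + 1) = B n * q n)
    (k : ℕ) (hqk : 4 ≤ q k) :
    (∀ m : ℤ, 1 ≤ m → m ≤ ⌊(q k : ℝ) / 4⌋ →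
      ∀ x ∈ Xset (fun n => B (n + 1)), (m * (B k : ℤ)) • x ∈ Tplus) ∧
    (4 ≤ q (k + 1) →
      ∀ x ∈ Xset (fun n => B (n + 1)), (((q k : ℤ) - 1) * (B k : ℤ)) • x ∈ Tplus) := by
  have hBpos : ∀ n, 0 < B n := by
    intro n; induction n with
    | zero => simp [hB0]
    | succ n ih => rw [hB]; exact Nat.mul_pos ih (hq n)
  have hBdvd : ∀ i j : ℕ, i ≤ j → B i ∣ B j := by
    intro i j h
    induction j with
    | zero => simpa [Nat.le_zero.mp h]
    | succ n ih =>
      rcases Nat.lt_or_ge i (n+1) with h' | h'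
      · exact (ih (Nat.lt_succ_iff.mp h')).trans ⟨q n, hB n⟩
      · have : i = n + 1 := by omega
        subst this; exact dvd_refl _
  have hzero : ∀ c : ℤ, c • (0 : 𝕋) ∈ Tplus :=
    fun c => ⟨0, by norm_num, by simp⟩
  -- key: handle membership in Xset given a bound for each n
  have key : ∀ c : ℤ, (∀ n : ℕ, ∃ j : ℤ, |(c:ℝ)/(B (n+1):ℝ) - j| ≤ 1/4) →
      ∀ x ∈ Xset (fun n => B (n + 1)), c • x ∈ Tplus := by
    intro c hc x hx
    rcases hx with h0 | ⟨n, hn | hn⟩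
    · rw [Set.mem_singleton_iff.mp h0]; exact hzero c
    · obtain ⟨j, hj⟩ := hc n
      rw [hn]; exact mem_Tplus_rat c _ j hj
    · obtain ⟨j, hj⟩ := hc n
      rw [hn, smul_neg]
      exact Tplus_neg (mem_Tplus_rat c _ j hj)
  constructor
  · intro m hm1 hm2 x hx
    have hm4 : 4 * m ≤ (q k : ℤ) := by
      have := (Int.le_floor.mp hm2)
      have : (m : ℝ) ≤ (q k : ℝ)/4 := this
      exact_mod_cast (by linarith : (4 * m : ℝ) ≤ (q k : ℝ))
    refine key _ ?_ x hx
    intro n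
    rcases Nat.lt_or_ge n k with hnk | hnk
    · -- n+1 ≤ k : integer
      obtain ⟨t, ht⟩ := hBdvd (n+1) k hnk
      refine ⟨m * t, ?_⟩
      have hb : (0:ℝ) < (B (n+1) : ℝ) := by exact_mod_cast hBpos (n+1)
      have : ((m * (B k : ℤ) : ℤ) : ℝ) / (B (n+1) : ℝ) = ((m * t : ℤ) : ℝ) := by
        rw [ht]; push_cast; field_simp
      rw [this]; simp
    · -- k ≤ n : B(n+1) = B k * s, q k ∣ s
      obtain ⟨t, ht⟩ := hBdvd (k+1) (n+1) (by omega)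
      have hbn : B (n+1) = B k * (q k * t) := by rw [ht, hB]; ring
      have ht1 : 1 ≤ t := by
        rcases Nat.eq_zero_or_pos t with h | h
        · subst h; have := hBpos (n+1); rw [hbn] at this; simp at this
        · exact h
      refine ⟨0, ?_⟩
      have hb : (0:ℝ) < (B (n+1) : ℝ) := by exact_mod_cast hBpos (n+1)
      have hBk : (0:ℝ) < (B k : ℝ) := by exact_mod_cast hBpos k
      have hval : ((m * (B k : ℤ) : ℤ) : ℝ) / (B (n+1) : ℝ) = (m : ℝ) / ((q k : ℝ) * t) := by
        rw [hbn]; push_cast; field_simp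
      rw [hval]; simp only [Int.cast_zero, sub_zero]; rw [abs_div]
      have hqt : (0:ℝ) < (q k : ℝ) * t := by
        have : (0:ℕ) < q k * t := Nat.mul_pos (hq k) ht1
        exact_mod_cast this
      rw [abs_of_pos hqt, abs_of_pos (by exact_mod_cast hm1 : (0:ℝ) < (m:ℝ))]
      rw [div_le_iff₀ hqt]
      have h1 : (4:ℝ) * m ≤ (q k : ℝ) := by exact_mod_cast hm4
      have h2 : (q k : ℝ) ≤ (q k : ℝ) * t := by
        nlinarith [hq k, (by exact_mod_cast ht1 : (1:ℝ) ≤ (t:ℝ)),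
          (by exact_mod_cast hq k : (0:ℝ) < (q k : ℝ))]
      linarith
  · intro hqk1 x hx
    refine key _ ?_ x hx
    intro n
    have hqkR : (4:ℝ) ≤ (q k : ℝ) := by exact_mod_cast hqk
    rcases Nat.lt_or_ge n k with hnk | hnk
    · obtain ⟨t, ht⟩ := hBdvd (n+1) k hnk
      refine ⟨((q k : ℤ) - 1) * t, ?_⟩
      have : ((((q k : ℤ) - 1) * (B k : ℤ) : ℤ) : ℝ) / (B (n+1) : ℝ)
          = ((((q k : ℤ) - 1) * t : ℤ) : ℝ) := by
        rw [ht]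
        have hb : (0:ℝ) < (B (n+1) : ℝ) := by exact_mod_cast hBpos (n+1)
        push_cast; field_simp
      rw [this]; simp
    · rcases Nat.eq_or_lt_of_le hnk with hnk' | hnk'
      · -- n = k
        subst hnk'
        refine ⟨1, ?_⟩
        have hb : (0:ℝ) < (q k : ℝ) := by exact_mod_cast hq k
        have hBk : (0:ℝ) < (B k : ℝ) := by exact_mod_cast hBpos k
        have hval : ((((q k : ℤ) - 1) * (B k : ℤ) : ℤ) : ℝ) / (B (k+1) : ℝ)
            = ((q k : ℝ) - 1) / (q k : ℝ) := by
          rw [hB]; push_cast; field_simp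
        rw [hval]
        have heq : ((q k : ℝ) - 1) / (q k : ℝ) - ((1:ℤ):ℝ) = -(1 / (q k : ℝ)) := by
          push_cast; field_simp; ring
        rw [heq, abs_neg, abs_of_pos (by positivity)]
        rw [div_le_div_iff₀ hb (by norm_num)]
        linarith [hqkR]
      · -- n > k : B(n+1) = B k * q k * q(k+1) * t
        obtain ⟨t, ht⟩ := hBdvd (k+2) (n+1) (by omega)
        have hbn : B (n+1) = B k * q k * (q (k+1) * t) := by
          rw [ht, hB, hB]; ring
        have ht1 : 1 ≤ t := by
          rcases Nat.eq_zero_or_pos t with h | h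
          · subst h; have := hBpos (n+1); rw [hbn] at this; simp at this
          · exact h
        refine ⟨0, ?_⟩
        have hqR : (0:ℝ) < (q k : ℝ) := by exact_mod_cast hq k
        have hBkR : (0:ℝ) < (B k : ℝ) := by exact_mod_cast hBpos k
        have hq1R : (4:ℝ) ≤ (q (k+1) : ℝ) := by exact_mod_cast hqk1
        have htR : (1:ℝ) ≤ (t:ℝ) := by exact_mod_cast ht1
        have hval : ((((q k : ℤ) - 1) * (B k : ℤ) : ℤ) : ℝ) / (B (n+1) : ℝ)
            = ((q k : ℝ) - 1) / ((q k : ℝ) * ((q (k+1) : ℝ) * t)) := by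
          rw [hbn]; push_cast; field_simp
        rw [hval]; simp only [Int.cast_zero, sub_zero]
        have hd : (0:ℝ) < (q k : ℝ) * ((q (k+1) : ℝ) * t) := by positivity
        rw [abs_of_nonneg (div_nonneg (by linarith) (le_of_lt hd))]
        rw [div_le_iff₀ hd]
        have h4 : (4:ℝ) ≤ (q (k+1):ℝ) * t := by nlinarith
        have h5 : (q k:ℝ) * 4 ≤ (q k:ℝ) * ((q (k+1):ℝ) * t) := by nlinarith
        linarith
end
end

section
/- Let {q_n} be positive integers, b_n = q_0···q_n (b_{-1} = 1), and X = {0} ∪ {±(1/b_n mod 1) | n ∈ ℕ} ⊆ T. For indices k₁ < k₂, the character of T given by t ↦ ([q_{k₁}/4]·b_{k₁−1} ± ⌊q_{k₂}/4⌋·b_{k₂−1})·t maps X into T₊, where [x] = max{n ∈ ℤ : n ≤ x} and ⌊x⌋ = max{n ∈ ℤ : n < x}. -/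
open Filter Topology

noncomputable section

lemma int_coe_torus (z : ℤ) : (((z : ℝ) : 𝕋)) = 0 := by
  have h : ((z : ℝ)) = z • (1 : ℝ) := by simp
  rw [h, AddCircle.coe_zsmul, AddCircle.coe_period, smul_zero]

lemma coe_add_int (r : ℝ) (z : ℤ) : (((r + z : ℝ) : 𝕋)) = ((r : ℝ) : 𝕋) := by
  rw [AddCircle.coe_add, int_coe_torus, add_zero]

/-- for `k₁ < k₂`, the character
`[q_{k₁}/4]·η_{k₁} ± ⌊q_{k₂}/4⌋·η_{k₂}` lies in `X^▷`, where `[x]` is the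
usual floor and `⌊x⌋ = max{n ∈ ℤ | n < x} = ⌈x⌉ - 1` is the strict floor.
Here `B k = b_{k-1}` (with `b_{-1} = 1`) and `η_k(t) = b_{k-1}·t`. -/
theorem stmt12 (q : ℕ → ℕ) (hq : ∀ n, 0 < q n)
    (B : ℕ → ℕ) (hB0 : B 0 = 1) (hB : ∀ n, B (n + 1) = B n * q n)
    (k₁ k₂ : ℕ) (hk : k₁ < k₂) (ε : ℤ) (hε : ε = 1 ∨ ε = -1) :
    ∀ x ∈ Xset (fun n => B (n + 1)),
      (⌊(q k₁ : ℝ) / 4⌋ * (B k₁ : ℤ) + ε * ((⌈(q k₂ : ℝ) / 4⌉ - 1) * (B k₂ : ℤ))) • x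
        ∈ Tplus := by
  -- basic facts about B
  have hBprod : ∀ k m, k ≤ m → B m = B k * ∏ i ∈ Finset.Ico k m, q i := by
    intro k m hkm
    induction m, hkm using Nat.le_induction with
    | base => simp
    | succ m hkm ih => rw [hB, ih, Finset.prod_Ico_succ_top hkm, mul_assoc]
  have hBpos : ∀ n, 0 < B n := by
    intro n
    rw [hBprod 0 n (Nat.zero_le n), hB0, one_mul]
    exact Finset.prod_pos fun i _ => hq i
  set m : ℤ := ⌊(q k₁ : ℝ) / 4⌋ * (B k₁ : ℤ) + ε * ((⌈(q k₂ : ℝ) / 4⌉ - 1) * (B k₂ : ℤ))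
    with hm
  clear_value m
  have hεabs : |(ε : ℝ)| = 1 := by rcases hε with h | h <;> simp [h]
  -- floor/ceil bounds
  have hF0 : (0 : ℝ) ≤ (⌊(q k₁ : ℝ) / 4⌋ : ℝ) := by
    have : (0 : ℤ) ≤ ⌊(q k₁ : ℝ) / 4⌋ := Int.floor_nonneg.mpr (by positivity)
    exact_mod_cast this
  have hF1 : (4 : ℝ) * (⌊(q k₁ : ℝ) / 4⌋ : ℝ) ≤ (q k₁ : ℝ) := by
    have := Int.floor_le ((q k₁ : ℝ) / 4)
    linarith
  have hG0 : (0 : ℝ) ≤ ((⌈(q k₂ : ℝ) / 4⌉ - 1 : ℤ) : ℝ) := by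
    have h1 : (1 : ℤ) ≤ ⌈(q k₂ : ℝ) / 4⌉ := by
      have hq2 : (0 : ℝ) < (q k₂ : ℝ) := by exact_mod_cast hq k₂
      exact Int.ceil_pos.mpr (by linarith)
    have : (0 : ℤ) ≤ ⌈(q k₂ : ℝ) / 4⌉ - 1 := by omega
    exact_mod_cast this
  have hG1 : (4 : ℝ) * ((⌈(q k₂ : ℝ) / 4⌉ - 1 : ℤ) : ℝ) ≤ (q k₂ : ℝ) - 1 := by
    have h := Int.ceil_lt_add_one ((q k₂ : ℝ) / 4)
    have h4 : (4 : ℝ) * (⌈(q k₂ : ℝ) / 4⌉ : ℝ) < (q k₂ : ℝ) + 4 := by linarith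
    have h4' : (4 : ℤ) * ⌈(q k₂ : ℝ) / 4⌉ < (q k₂ : ℤ) + 4 := by exact_mod_cast h4
    have : (4 : ℤ) * (⌈(q k₂ : ℝ) / 4⌉ - 1) ≤ (q k₂ : ℤ) - 1 := by omega
    calc (4 : ℝ) * ((⌈(q k₂ : ℝ) / 4⌉ - 1 : ℤ) : ℝ)
        = (((4 : ℤ) * (⌈(q k₂ : ℝ) / 4⌉ - 1) : ℤ) : ℝ) := by push_cast; ring
      _ ≤ (((q k₂ : ℤ) - 1 : ℤ) : ℝ) := by exact_mod_cast this
      _ = (q k₂ : ℝ) - 1 := by push_cast; ring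
  -- key claim: the fractional translate
  have key : ∀ n : ℕ, ∃ r : ℝ, ∃ z : ℤ, |r| ≤ 1/4 ∧
      (m : ℝ) * ((B (n+1) : ℝ))⁻¹ = r + z := by
    intro n
    have hcpos : (0 : ℝ) < (B (n+1) : ℝ) := by exact_mod_cast hBpos (n+1)
    rcases le_or_gt (n+1) k₁ with h1 | h1
    · -- B (n+1) divides m
      have hd1 : (B (n+1) : ℤ) ∣ (B k₁ : ℤ) := by
        exact_mod_cast Dvd.intro _ (hBprod (n+1) k₁ h1).symm
      have hd2 : (B (n+1) : ℤ) ∣ (B k₂ : ℤ) := by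
        exact_mod_cast Dvd.intro _ (hBprod (n+1) k₂ (h1.trans hk.le)).symm
      have hdm : (B (n+1) : ℤ) ∣ m := by
        rw [hm]
        exact dvd_add (Dvd.dvd.mul_left hd1 _) (Dvd.dvd.mul_left (Dvd.dvd.mul_left hd2 _) _)
      obtain ⟨d, hd⟩ := hdm
      refine ⟨0, d, by norm_num, ?_⟩
      rw [hd]
      push_cast
      field_simp
      ring
    rcases le_or_gt (n+1) k₂ with h2 | h2
    · -- middle case
      have hd2 : (B (n+1) : ℤ) ∣ (B k₂ : ℤ) := by
        exact_mod_cast Dvd.intro _ (hBprod (n+1) k₂ h2).symm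
      obtain ⟨d, hd⟩ := hd2
      refine ⟨(⌊(q k₁ : ℝ) / 4⌋ : ℝ) * (B k₁ : ℝ) * ((B (n+1) : ℝ))⁻¹,
        ε * ((⌈(q k₂ : ℝ) / 4⌉ - 1) * d), ?_, ?_⟩
      · -- bound
        have hsplit := hBprod k₁ (n+1) h1.le
        set P : ℕ := ∏ i ∈ Finset.Ico k₁ (n+1), q i with hP
        have hPq : (q k₁ : ℕ) ≤ P := by
          rw [hP, Finset.prod_eq_prod_Ico_succ_bot h1]
          exact Nat.le_mul_of_pos_right _ (Finset.prod_pos fun i _ => hq i)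
        have hPq' : (q k₁ : ℝ) ≤ (P : ℝ) := by exact_mod_cast hPq
        have hBk₁pos : (0 : ℝ) < (B k₁ : ℝ) := by exact_mod_cast hBpos k₁
        have hPpos : (0 : ℝ) < (P : ℝ) := by
          have : 0 < P := Finset.prod_pos fun i _ => hq i
          exact_mod_cast this
        have hq1pos : (0 : ℝ) < (q k₁ : ℝ) := by exact_mod_cast hq k₁
        have hBn : (B (n+1) : ℝ) = (B k₁ : ℝ) * (P : ℝ) := by exact_mod_cast hsplit
        rw [hBn]
        have heq : (⌊(q k₁ : ℝ) / 4⌋ : ℝ) * (B k₁ : ℝ) * ((B k₁ : ℝ) * (P : ℝ))⁻¹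
            = (⌊(q k₁ : ℝ) / 4⌋ : ℝ) / (P : ℝ) := by
          field_simp
        rw [heq, abs_le]
        constructor
        · have : 0 ≤ (⌊(q k₁ : ℝ) / 4⌋ : ℝ) / (P : ℝ) := by positivity
          linarith
        · rw [div_le_div_iff₀ hPpos (by norm_num : (0:ℝ) < 4)]
          nlinarith
      · have hdR : ((B k₂ : ℕ) : ℝ) = (B (n+1) : ℝ) * (d : ℝ) := by exact_mod_cast hd
        rw [hm]
        push_cast
        rw [hdR]
        field_simp
    · -- large case
      have h1' : k₁ ≤ n + 1 := h1.le
      have h2' : k₂ ≤ n + 1 := h2.le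
      refine ⟨(m : ℝ) * ((B (n+1) : ℝ))⁻¹, 0, ?_, by push_cast; ring⟩
      -- set up products
      set p1 : ℕ := ∏ i ∈ Finset.Ico k₁ k₂, q i with hp1
      set p3 : ℕ := ∏ i ∈ Finset.Ico (k₂+1) (n+1), q i with hp3
      have hP2 : (∏ i ∈ Finset.Ico k₂ (n+1), q i) = q k₂ * p3 :=
        Finset.prod_eq_prod_Ico_succ_bot h2 q
      have hBk2 : B k₂ = B k₁ * p1 := hBprod k₁ k₂ hk.le
      have hBn : B (n+1) = B k₁ * p1 * (q k₂ * p3) := by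
        rw [hBprod k₁ (n+1) h1', ← Finset.prod_Ico_consecutive q hk.le h2', hP2, mul_assoc]
      have hp1q : (q k₁ : ℕ) ≤ p1 := by
        rw [hp1, Finset.prod_eq_prod_Ico_succ_bot hk]
        exact Nat.le_mul_of_pos_right _ (Finset.prod_pos fun i _ => hq i)
      -- real versions
      have hBk₁pos : (0 : ℝ) < (B k₁ : ℝ) := by exact_mod_cast hBpos k₁
      have hBk₁1 : (1 : ℝ) ≤ (B k₁ : ℝ) := by exact_mod_cast hBpos k₁
      have hp1pos : (0 : ℝ) < (p1 : ℝ) := by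
        have : 0 < p1 := Finset.prod_pos fun i _ => hq i
        exact_mod_cast this
      have hp3pos : (1 : ℝ) ≤ (p3 : ℝ) := by
        have : 1 ≤ p3 := Finset.prod_pos fun i _ => hq i
        exact_mod_cast this
      have hq1pos : (1 : ℝ) ≤ (q k₁ : ℝ) := by exact_mod_cast hq k₁
      have hq2pos : (1 : ℝ) ≤ (q k₂ : ℝ) := by exact_mod_cast hq k₂
      have hp1q' : (q k₁ : ℝ) ≤ (p1 : ℝ) := by exact_mod_cast hp1q
      have hBnR : (B (n+1) : ℝ) = (B k₁ : ℝ) * (p1 : ℝ) * ((q k₂ : ℝ) * (p3 : ℝ)) := by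
        exact_mod_cast hBn
      have hBk2R : (B k₂ : ℝ) = (B k₁ : ℝ) * (p1 : ℝ) := by exact_mod_cast hBk2
      -- bound |m| * (B(n+1))⁻¹ ≤ 1/4
      have hmabs : |(m : ℝ)| ≤ (⌊(q k₁ : ℝ) / 4⌋ : ℝ) * (B k₁ : ℝ)
          + ((⌈(q k₂ : ℝ) / 4⌉ - 1 : ℤ) : ℝ) * (B k₂ : ℝ) := by
        have : (m : ℝ) = (⌊(q k₁ : ℝ) / 4⌋ : ℝ) * (B k₁ : ℝ)
            + (ε : ℝ) * (((⌈(q k₂ : ℝ) / 4⌉ - 1 : ℤ) : ℝ) * (B k₂ : ℝ)) := by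
          rw [hm]; push_cast; ring
        rw [this]
        calc |(⌊(q k₁ : ℝ) / 4⌋ : ℝ) * (B k₁ : ℝ)
            + (ε : ℝ) * (((⌈(q k₂ : ℝ) / 4⌉ - 1 : ℤ) : ℝ) * (B k₂ : ℝ))|
            ≤ |(⌊(q k₁ : ℝ) / 4⌋ : ℝ) * (B k₁ : ℝ)|
              + |(ε : ℝ) * (((⌈(q k₂ : ℝ) / 4⌉ - 1 : ℤ) : ℝ) * (B k₂ : ℝ))| :=
              abs_add_le _ _
          _ = (⌊(q k₁ : ℝ) / 4⌋ : ℝ) * (B k₁ : ℝ)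
              + ((⌈(q k₂ : ℝ) / 4⌉ - 1 : ℤ) : ℝ) * (B k₂ : ℝ) := by
              rw [abs_mul, abs_mul, hεabs, one_mul, abs_mul]
              rw [abs_of_nonneg hF0, abs_of_nonneg hG0,
                abs_of_nonneg hBk₁pos.le, abs_of_nonneg (by positivity : (0:ℝ) ≤ (B k₂ : ℝ))]
      rw [abs_mul, abs_of_nonneg (inv_nonneg.mpr hcpos.le)]
      have hc4 : |(m : ℝ)| * ((B (n+1) : ℝ))⁻¹ ≤ 1/4 := by
        rw [← div_eq_mul_inv, div_le_div_iff₀ hcpos (by norm_num : (0:ℝ) < 4)]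
        have hineq : ((⌊(q k₁ : ℝ) / 4⌋ : ℝ) * (B k₁ : ℝ)
            + ((⌈(q k₂ : ℝ) / 4⌉ - 1 : ℤ) : ℝ) * (B k₂ : ℝ)) * 4 ≤ 1 * (B (n+1) : ℝ) := by
          rw [hBk2R, hBnR, one_mul]
          have hbp1 : (0:ℝ) ≤ (B k₁ : ℝ) * (p1 : ℝ) := by positivity
          have e1 : 4 * (⌊(q k₁ : ℝ) / 4⌋ : ℝ) * (B k₁ : ℝ) ≤ (p1 : ℝ) * (B k₁ : ℝ) :=
            mul_le_mul_of_nonneg_right (by linarith) hBk₁pos.le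
          have e2 : 4 * ((⌈(q k₂ : ℝ) / 4⌉ - 1 : ℤ) : ℝ) * ((B k₁ : ℝ) * (p1 : ℝ))
              ≤ ((q k₂ : ℝ) - 1) * ((B k₁ : ℝ) * (p1 : ℝ)) :=
            mul_le_mul_of_nonneg_right (by linarith) hbp1
          have e3 : (q k₂ : ℝ) * ((B k₁ : ℝ) * (p1 : ℝ)) * 1
              ≤ (q k₂ : ℝ) * ((B k₁ : ℝ) * (p1 : ℝ)) * (p3 : ℝ) :=
            mul_le_mul_of_nonneg_left hp3pos (by positivity)
          nlinarith [e1, e2, e3]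
        calc |(m : ℝ)| * 4 ≤ _ * 4 := by linarith [hmabs]
          _ ≤ 1 * (B (n+1) : ℝ) := hineq
      exact hc4
  -- now the main argument
  intro x hx
  rcases hx with hx | ⟨n, hn | hn⟩
  · simp only [Set.mem_singleton_iff] at hx
    subst hx
    exact ⟨0, by norm_num, by simp⟩
  · obtain ⟨r, z, hr, hrz⟩ := key n
    subst hn
    refine ⟨r, hr, ?_⟩
    rw [← AddCircle.coe_zsmul]
    have : m • ((B (n+1) : ℝ))⁻¹ = r + z := by rw [zsmul_eq_mul]; exact hrz
    rw [this, coe_add_int]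
  · obtain ⟨r, z, hr, hrz⟩ := key n
    subst hn
    refine ⟨-r, by rwa [abs_neg], ?_⟩
    rw [← AddCircle.coe_neg, ← AddCircle.coe_zsmul]
    have : m • (-((B (n+1) : ℝ))⁻¹) = -r + ((-z : ℤ) : ℝ) := by
      rw [zsmul_eq_mul, mul_neg, hrz]
      push_cast
      ring
    rw [this, coe_add_int]
end
end

section
/- Let z ∈ T be identified with its representative in (−1/2, 1/2], and suppose z = Σ_{i≥0} c_i/d_i is a standard representation with respect to a divisibility chain d_0 | d_1 | ⋯ (d_{-1} = 1). If m·z ∈ T₊ for all m = 1, …, ⌈d_0/6⌉ (where ⌈x⌉ = min{n ∈ ℤ : x < n}), then c_0 ∈ {−1, 0, 1}. -/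
open Filter Topology

noncomputable section

/-- if `z = Σ c_i/d_i` is a standard representation and
`m·z ∈ T₊` for all `m = 1, …, ⌈d_0/6⌉` (strict ceiling `⌈x⌉ = min{n | x < n}
 = ⌊x⌋ + 1`), then `c_0 ∈ {-1, 0, 1}`. -/
theorem stmt13 (d : ℕ → ℕ) (hd0 : 0 < d 0) (hdiv : ∀ i, d i ∣ d (i + 1))
    (hmono : StrictMono d)
    (c : ℕ → ℤ) (z : ℝ) (hz : z ∈ Set.Ioc (-(1 / 2) : ℝ) (1 / 2))
    (hsum : HasSum (fun i => (c i : ℝ) / d i) z)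
    (hstd1a : |(c 0 : ℝ)| ≤ (d 0 : ℝ) / 2)
    (hstd1 : ∀ i, |(c (i + 1) : ℝ)| ≤ (d (i + 1) : ℝ) / (2 * d i))
    (hstd2 : ∀ k, |z - ∑ i ∈ Finset.range (k + 1), (c i : ℝ) / d i| ≤ 1 / (2 * d k))
    (hstd3 : ∀ k, |z - ∑ i ∈ Finset.range (k + 1), (c i : ℝ) / d i| = 1 / (2 * d k) →
      |(c k : ℝ) / d k| < |z - ∑ i ∈ Finset.range k, (c i : ℝ) / d i|)
    (hT : ∀ m : ℤ, 1 ≤ m → m ≤ ⌊(d 0 : ℝ) / 6⌋ + 1 →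
      (((m : ℝ) * z : ℝ) : 𝕋) ∈ Tplus) :
    c 0 = -1 ∨ c 0 = 0 ∨ c 0 = 1 := by
  by_contra hcon
  push_neg at hcon
  obtain ⟨h1, h2, h3⟩ := hcon
  have habs : (2 : ℤ) ≤ |c 0| := by
    rcases le_or_gt 0 (c 0) with h' | h'
    · rw [abs_of_nonneg h']; omega
    · rw [abs_of_neg h']; omega
  have habsR : (2 : ℝ) ≤ |(c 0 : ℝ)| := by
    rw [← Int.cast_abs]; exact_mod_cast habs
  have hd0R : (0 : ℝ) < d 0 := by exact_mod_cast hd0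
  have hk0 := hstd2 0
  rw [Finset.sum_range_one] at hk0
  set w : ℝ := |z| with hwdef
  -- lower bound on w
  have hcd : (2 : ℝ) / d 0 ≤ |(c 0 : ℝ) / d 0| := by
    rw [abs_div, abs_of_pos hd0R]
    exact div_le_div_of_nonneg_right habsR hd0R.le
  have htri : |(c 0 : ℝ) / d 0| - |z| ≤ |(c 0 : ℝ) / d 0 - z| := abs_sub_abs_le_abs_sub _ _
  have habs_comm : |(c 0 : ℝ) / d 0 - z| = |z - (c 0 : ℝ) / d 0| := abs_sub_comm _ _
  have hwlb : 3 / (2 * (d 0 : ℝ)) ≤ w := by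
    have : 1 / (2 * (d 0 : ℝ)) + 3 / (2 * (d 0 : ℝ)) = 2 / (d 0 : ℝ) := by
      field_simp; ring
    rw [hwdef]
    linarith [htri, habs_comm ▸ hk0]
  have hw0 : (0 : ℝ) < w := lt_of_lt_of_le (by positivity) hwlb
  have hwub : w ≤ 1 / 2 := by
    rw [hwdef, abs_le]
    exact ⟨le_of_lt hz.1, hz.2⟩
  -- the multiplier m
  set m : ℤ := ⌊1 / (4 * w)⌋ + 1 with hmdef
  have hm1 : 1 ≤ m := by
    have : (0 : ℤ) ≤ ⌊1 / (4 * w)⌋ := Int.floor_nonneg.2 (by positivity)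
    omega
  have hfr : 1 / (4 * w) ≤ (d 0 : ℝ) / 6 := by
    have h3 : 3 ≤ w * (2 * (d 0 : ℝ)) := (div_le_iff₀ (by positivity)).1 hwlb
    rw [div_le_div_iff₀ (by positivity) (by norm_num)]
    nlinarith [h3]
  have hmub : m ≤ ⌊(d 0 : ℝ) / 6⌋ + 1 := by
    have := Int.floor_mono hfr
    omega
  have hmR : (1 : ℝ) ≤ (m : ℝ) := by exact_mod_cast hm1
  -- bounds on m * w
  have hmwl : 1 / 4 < (m : ℝ) * w := by
    have h := Int.lt_floor_add_one (1 / (4 * w))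
    have : 1 / (4 * w) < (m : ℝ) := by rw [hmdef]; push_cast; linarith
    have := (div_lt_iff₀ (by positivity : (0:ℝ) < 4 * w)).1 this
    nlinarith
  have hmwu : (m : ℝ) * w ≤ 1 / 4 + w := by
    have h := Int.floor_le (1 / (4 * w))
    have : ((m : ℝ) - 1) ≤ 1 / (4 * w) := by rw [hmdef]; push_cast; linarith
    have := (le_div_iff₀ (by positivity : (0:ℝ) < 4 * w)).1 this
    nlinarith
  -- apply the hypothesis
  obtain ⟨r, hr, hrz⟩ := hT m hm1 hmub
  obtain ⟨k, hk⟩ : ∃ k : ℤ, r - (m : ℝ) * z = k := by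
    rw [QuotientAddGroup.eq_iff_sub_mem, AddSubgroup.mem_zmultiples_iff] at hrz
    obtain ⟨k, hk⟩ := hrz
    exact ⟨k, by simpa using hk.symm⟩
  -- |m z| = m w
  have hu : |(m : ℝ) * z| = (m : ℝ) * w := by
    rw [abs_mul, hwdef, abs_of_pos (by linarith : (0:ℝ) < (m:ℝ))]
  -- analyze k
  have hkub : |(k : ℝ)| ≤ 1 := by
    have : |(k : ℝ)| ≤ |r| + |(m : ℝ) * z| := by
      calc |(k : ℝ)| = |r - (m : ℝ) * z| := by rw [hk]
        _ ≤ |r| + |(m : ℝ) * z| := abs_sub _ _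
    rw [hu] at this
    linarith
  have hklb : (0 : ℝ) < |(k : ℝ)| := by
    have : |(m : ℝ) * z| - |r| ≤ |(k : ℝ)| := by
      calc |(m : ℝ) * z| - |r| ≤ |(m : ℝ) * z - r| := abs_sub_abs_le_abs_sub _ _
        _ = |(k : ℝ)| := by rw [abs_sub_comm, hk]
    rw [hu] at this
    linarith
  have hk1 : |k| = 1 := by
    have hub : |k| ≤ 1 := by exact_mod_cast hkub
    have hlb : k ≠ 0 := by
      intro h0
      rw [h0] at hklb
      simp at hklb
    rcases le_or_gt 0 k with h' | h'
    · rw [abs_of_nonneg h'] at hub ⊢; omega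
    · rw [abs_of_neg h'] at hub ⊢; omega
  have hk1R : |(k : ℝ)| = 1 := by rw [← Int.cast_abs, hk1]; norm_num
  -- conclude m w = 3/4, then w = 1/2, then m = 3/2, contradiction
  have hmw34 : (m : ℝ) * w = 3 / 4 := by
    have hge : 3 / 4 ≤ |(m : ℝ) * z| := by
      have : |(k : ℝ)| - |r| ≤ |(m : ℝ) * z| := by
        calc |(k : ℝ)| - |r| ≤ |(k : ℝ) - r| := abs_sub_abs_le_abs_sub _ _
          _ = |(m : ℝ) * z| := by
              rw [show (k : ℝ) - r = -((m : ℝ) * z) by linarith, abs_neg]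
      linarith
    rw [hu] at hge
    linarith
  have hwhalf : w = 1 / 2 := by linarith
  rw [hwhalf] at hmw34
  have : (2 : ℤ) * m = 3 := by
    have : (2 : ℝ) * (m : ℝ) = 3 := by linarith
    exact_mod_cast this
  omega
end
end

section
/- With the same setup (z ∈ T with standard representation z = Σ c_i/d_i), if m·z ∈ T₊ for all m = 1, …, [d_0/4] and also for m = d_0 − 1, then c_0 ∈ {−1, 0, 1}. -/
open Filter Topology

noncomputable section

lemma tplus_elim {w : ℝ} (h : ((w : ℝ) : 𝕋) ∈ Tplus) : ∃ k : ℤ, |w - (k : ℝ)| ≤ 1/4 := by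
  obtain ⟨r, hr, hrw⟩ := h
  have hmem : r - w ∈ AddSubgroup.zmultiples (1 : ℝ) :=
    QuotientAddGroup.eq_iff_sub_mem.mp hrw
  obtain ⟨k, hk⟩ := AddSubgroup.mem_zmultiples_iff.mp hmem
  refine ⟨-k, ?_⟩
  have : (k : ℝ) = r - w := by simpa using hk
  have hw : w - ((-k : ℤ) : ℝ) = r := by push_cast; linarith
  rwa [hw]

set_option maxHeartbeats 1000000 in
lemma auxkey (N A z : ℝ) (hA2 : 2 ≤ A) (han : A ≤ N/2)
    (hz : |z| ≤ 1/4)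
    (hεa : |z - A/N| ≤ 1/(2*N))
    (heqa : |z - A/N| = 1/(2*N) → |A/N| < |z|)
    (hm : ∀ m : ℤ, 1 ≤ m → (m : ℝ) ≤ N/4 → ∃ k : ℤ, |(m : ℝ)*z - (k : ℝ)| ≤ 1/4)
    (hn1 : ∃ j : ℤ, |(N - 1)*z - A - (j : ℝ)| ≤ 1/4) : False := by
  have hN4 : (4 : ℝ) ≤ N := by linarith
  have hN0 : (0 : ℝ) < N := by linarith
  have hA0 : (0 : ℝ) < A := by linarith
  obtain ⟨α, hα⟩ : ∃ x : ℝ, x = A/N := ⟨_, rfl⟩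
  rw [← hα] at hεa heqa
  obtain ⟨ε, hεd⟩ : ∃ x : ℝ, x = z - α := ⟨_, rfl⟩
  rw [← hεd] at hεa heqa
  have hαN : α * N = A := by rw [hα]; field_simp
  have hαpos : 0 < α := by rw [hα]; positivity
  have hzε : z = α + ε := by rw [hεd]; ring
  have hε2 := abs_le.mp hεa
  have hz2 := abs_le.mp hz
  have hNinv : 1/(2*N) ≤ 1/8 := by
    rw [div_le_div_iff₀ (by linarith) (by norm_num)]; linarith
  have hNinv0 : 0 < 1/(2*N) := by positivity
  have hαup : α ≤ 1/4 + 1/(2*N) := by linarith [hz2.2, hε2.1]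
  -- Step 1: the (N-1) condition
  obtain ⟨j, hj⟩ := hn1
  have hNz : (N - 1)*z - A = -α + (N-1)*ε := by
    rw [hzε]; linear_combination hαN
  rw [hNz] at hj
  have hk2 := abs_le.mp hj
  have hNid : (N-1)*(1/(2*N)) = 1/2 - 1/(2*N) := by field_simp
  have hN1nn : (0:ℝ) ≤ N - 1 := by linarith
  have hNε : -(1/2) + 1/(2*N) ≤ (N-1)*ε ∧ (N-1)*ε ≤ 1/2 - 1/(2*N) := by
    constructor
    · have h5 := mul_le_mul_of_nonneg_left hε2.1 hN1nn
      have h6 : (N-1)*(-(1/(2*N))) = -((N-1)*(1/(2*N))) := by ring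
      linarith [hNid]
    · have := mul_le_mul_of_nonneg_left hε2.2 hN1nn
      linarith [hNid]
  have hjub : (j : ℝ) < 1 := by linarith [hk2.2, hNε.2, hαpos, hNinv]
  have hjlb : (-1 : ℝ) ≤ (j : ℝ) := by linarith [hk2.1, hNε.1, hαup]
  have hjint : j = -1 ∨ j = 0 := by
    have h1 : j < 1 := by exact_mod_cast hjub
    have h2 : (-1 : ℤ) ≤ j := by exact_mod_cast hjlb
    omega
  have hstep1 : (N-1)*ε ≥ α - 1/4 := by
    rcases hjint with hj1 | hj0
    · -- equality case
      exfalso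
      rw [hj1] at hk2
      have ht : -α + (N-1)*ε ≤ -(3/4) := by push_cast at hk2; linarith [hk2.2]
      have hαz : α ≤ 1/4 - ε := by linarith [hz2.2]
      have hrel : (N-1)*ε = N*ε - ε := by ring
      have hNε2 : N * ε ≤ -(1/2) := by linarith
      have hεeq : ε = -(1/(2*N)) := by
        have hh : -(1/(2*N)) * N = -(1/2) := by field_simp
        have h5 : ε*N ≤ -(1/(2*N))*N := by rw [hh]; linarith
        exact le_antisymm (le_of_mul_le_mul_right h5 hN0) hε2.1
      have heq2 := heqa (by rw [hεeq, abs_neg]; exact abs_of_pos (by positivity))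
      have hαval : α ≥ 1/4 + 1/(2*N) := by
        have h4 : (N-1)*ε = -(1/2) + 1/(2*N) := by
          rw [hεeq]; linear_combination -hNid
        linarith [ht, h4]
      have habs : |α| = α := abs_of_pos hαpos
      rw [habs] at heq2
      linarith [heq2, le_abs_self z, neg_abs_le z, hz]
    · rw [hj0] at hk2; push_cast at hk2; linarith [hk2.1]
  -- Step 2: α ≤ 1/4
  have hα14 : α ≤ 1/4 := by
    have hεz : ε ≤ 1/4 - α := by linarith [hz2.2]
    nlinarith [hstep1, mul_le_mul_of_nonneg_left hεz hN1nn]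
  have hAN4 : A ≤ N/4 := by
    have h := mul_le_mul_of_nonneg_right hα14 hN0.le
    rw [hαN] at h
    linarith
  -- Step 3: m = ⌊N/(2A)⌋
  have h2A : (0 : ℝ) < 2*A := by linarith
  obtain ⟨m, hm'⟩ : ∃ m : ℤ, m = ⌊N/(2*A)⌋ := ⟨_, rfl⟩
  have hmle : (m : ℝ) ≤ N/(2*A) := hm' ▸ Int.floor_le _
  have hmgt : N/(2*A) < (m : ℝ) + 1 := hm' ▸ Int.lt_floor_add_one _
  have hm1 : 1 ≤ m := by
    rw [hm']
    apply Int.le_floor.mpr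
    push_cast
    rw [le_div_iff₀ h2A]
    linarith [hAN4]
  have hmR1 : (1 : ℝ) ≤ (m : ℝ) := by exact_mod_cast hm1
  have hmN4 : (m : ℝ) ≤ N/4 := by
    have h1 : N/(2*A) ≤ N/4 :=
      div_le_div_of_nonneg_left hN0.le (by norm_num) (by linarith)
    linarith
  have hdivA : N/(2*A)*A = N/2 := by field_simp
  have hmA1 : (m : ℝ)*A ≤ N/2 := by
    have h := mul_le_mul_of_nonneg_right hmle hA0.le
    linarith [hdivA]
  have hmA2 : N/2 - A < (m : ℝ)*A := by
    have h := mul_lt_mul_of_pos_right hmgt hA0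
    have h3 : ((m:ℝ)+1)*A = (m:ℝ)*A + A := by ring
    linarith [hdivA]
  obtain ⟨k2, hk2'⟩ := hm m hm1 hmN4
  have hk2b := abs_le.mp hk2'
  have hmz : (m : ℝ)*z = (m:ℝ)*A/N + (m:ℝ)*ε := by
    rw [hzε, ← hαN]; field_simp
  have hmαle : (m:ℝ)*A/N ≤ 1/2 := by rw [div_le_iff₀ hN0]; linarith
  have hgt2 : 1/2 - α < (m:ℝ)*A/N := by
    rw [lt_div_iff₀ hN0]
    have hexp : (1/2 - α)*N = N/2 - α*N := by ring
    rw [hαN] at hexp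
    linarith [hmA2]
  have hmαgt : 1/4 < (m:ℝ)*A/N := by linarith [hgt2, hα14]
  have hmε : |(m:ℝ)*ε| ≤ 1/8 := by
    rw [abs_mul, abs_of_nonneg (by linarith : (0:ℝ) ≤ (m:ℝ))]
    have h1 : (m:ℝ)*|ε| ≤ (N/4)*(1/(2*N)) :=
      mul_le_mul hmN4 hεa (abs_nonneg _) (by linarith)
    have h2 : (N/4)*(1/(2*N)) = 1/8 := by field_simp; ring
    linarith
  have hmεb := abs_le.mp hmε
  have hmzlb : 1/8 < (m:ℝ)*z := by rw [hmz]; linarith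
  have hmzub : (m:ℝ)*z ≤ 5/8 := by rw [hmz]; linarith
  have hk20 : k2 = 0 := by
    have h1 : (k2 : ℝ) < 1 := by linarith [hk2b.1]
    have h2 : (-1 : ℝ) < (k2 : ℝ) := by linarith [hk2b.2]
    have h1' : k2 < 1 := by exact_mod_cast h1
    have h2' : (-1 : ℤ) < k2 := by exact_mod_cast h2
    omega
  rw [hk20] at hk2b
  push_cast at hk2b
  have hmz14 : (m:ℝ)*z ≤ 1/4 := by linarith [hk2b.2]
  have hmεneg : (m:ℝ)*ε < α - 1/4 := by
    rw [hmz] at hmz14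
    linarith [hgt2]
  have hεneg : ε < 0 := by
    by_contra h
    push_neg at h
    have : (0:ℝ) ≤ (m:ℝ)*ε := mul_nonneg (by linarith) h
    linarith [hα14]
  have hmleN1 : (m : ℝ) ≤ N - 1 := by linarith
  have hfin : (N-1)*ε ≤ (m:ℝ)*ε := mul_le_mul_of_nonpos_right hmleN1 hεneg.le
  linarith only [hstep1, hmεneg, hfin]



/-- if `z = Σ c_i/d_i` is a standard representation and
`m·z ∈ T₊` for all `m = 1, …, [d_0/4]` and for `m = d_0 - 1`, then
`c_0 ∈ {-1, 0, 1}`. -/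
theorem stmt14 (d : ℕ → ℕ) (hd0 : 0 < d 0) (hdiv : ∀ i, d i ∣ d (i + 1))
    (hmono : StrictMono d)
    (c : ℕ → ℤ) (z : ℝ) (hz : z ∈ Set.Ioc (-(1 / 2) : ℝ) (1 / 2))
    (hsum : HasSum (fun i => (c i : ℝ) / d i) z)
    (hstd1a : |(c 0 : ℝ)| ≤ (d 0 : ℝ) / 2)
    (hstd1 : ∀ i, |(c (i + 1) : ℝ)| ≤ (d (i + 1) : ℝ) / (2 * d i))
    (hstd2 : ∀ k, |z - ∑ i ∈ Finset.range (k + 1), (c i : ℝ) / d i| ≤ 1 / (2 * d k))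
    (hstd3 : ∀ k, |z - ∑ i ∈ Finset.range (k + 1), (c i : ℝ) / d i| = 1 / (2 * d k) →
      |(c k : ℝ) / d k| < |z - ∑ i ∈ Finset.range k, (c i : ℝ) / d i|)
    (hT1 : ∀ m : ℤ, 1 ≤ m → m ≤ ⌊(d 0 : ℝ) / 4⌋ →
      (((m : ℝ) * z : ℝ) : 𝕋) ∈ Tplus)
    (hT2 : ((((d 0 : ℝ) - 1) * z : ℝ) : 𝕋) ∈ Tplus) :
    c 0 = -1 ∨ c 0 = 0 ∨ c 0 = 1 := by
  by_contra hcon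
  push_neg at hcon
  obtain ⟨h1, h2, h3⟩ := hcon
  have hsign : c 0 ≤ -2 ∨ 2 ≤ c 0 := by omega
  set N : ℝ := (d 0 : ℝ) with hNdef
  have hN0 : (0 : ℝ) < N := by rw [hNdef]; exact_mod_cast hd0
  -- extract the basic real facts
  have hε : |z - (c 0 : ℝ)/N| ≤ 1/(2*N) := by
    have h := hstd2 0
    rwa [Finset.sum_range_one] at h
  have heq : |z - (c 0 : ℝ)/N| = 1/(2*N) → |(c 0 : ℝ)/N| < |z| := by
    intro h
    have h' := hstd3 0 (by rwa [Finset.sum_range_one])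
    rwa [Finset.sum_range_zero, sub_zero] at h'
  have hm' : ∀ m : ℤ, 1 ≤ m → (m : ℝ) ≤ N/4 → ∃ k : ℤ, |(m : ℝ)*z - (k : ℝ)| ≤ 1/4 :=
    fun m hm1 hm2 => tplus_elim (hT1 m hm1 (Int.le_floor.mpr hm2))
  have hA2' : (2 : ℝ) ≤ |(c 0 : ℝ)| := by
    have : (2 : ℤ) ≤ |c 0| := by
      rcases le_or_gt 0 (c 0) with h | h
      · rw [abs_of_nonneg h]; omega
      · rw [abs_of_neg h]; omega
    calc (2:ℝ) = ((2:ℤ):ℝ) := by norm_num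
      _ ≤ ((|c 0| : ℤ) : ℝ) := by exact_mod_cast this
      _ = |(c 0 : ℝ)| := by push_cast; ring
  have hN4 : (4 : ℝ) ≤ N := by linarith [hstd1a]
  -- |z| ≤ 1/4 using m = 1
  have hz14 : |z| ≤ 1/4 := by
    obtain ⟨k, hk⟩ := hm' 1 le_rfl (by norm_num; linarith)
    rw [Int.cast_one, one_mul] at hk
    have hk2 := abs_le.mp hk
    have hzIoc := hz
    obtain ⟨hzl, hzu⟩ := hzIoc
    have hk0 : k = 0 := by
      have hu : (k : ℝ) < 1 := by linarith
      have hl : (-1 : ℝ) < (k : ℝ) := by linarith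
      have hu' : k < 1 := by exact_mod_cast hu
      have hl' : (-1 : ℤ) < k := by exact_mod_cast hl
      omega
    rw [hk0] at hk
    simpa using hk
  obtain ⟨k1, hk1⟩ := tplus_elim hT2
  rcases hsign with hneg | hpos
  · -- negative case: apply auxkey to -z, -c0
    apply auxkey N (-(c 0 : ℝ)) (-z)
    · have : (2 : ℤ) ≤ -(c 0) := by omega
      calc (2:ℝ) = ((2:ℤ):ℝ) := by norm_num
        _ ≤ ((-(c 0) : ℤ) : ℝ) := by exact_mod_cast this
        _ = -(c 0 : ℝ) := by push_cast; ring
    · have := neg_abs_le ((c 0 : ℝ))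
      linarith [hstd1a]
    · rwa [abs_neg]
    · have he : -z - (-(c 0 : ℝ))/N = -(z - (c 0 : ℝ)/N) := by ring
      rw [he, abs_neg]
      exact hε
    · intro h
      have he : -z - (-(c 0 : ℝ))/N = -(z - (c 0 : ℝ)/N) := by ring
      rw [he, abs_neg] at h
      have h' := heq h
      have e1 : (-(c 0 : ℝ))/N = -((c 0 : ℝ)/N) := by ring
      rw [e1, abs_neg, abs_neg]
      exact h'
    · intro m hm1 hm2
      obtain ⟨k, hk⟩ := hm' m hm1 hm2
      refine ⟨-k, ?_⟩
      have he : (m:ℝ)*(-z) - ((-k : ℤ):ℝ) = -((m:ℝ)*z - (k:ℝ)) := by push_cast; ring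
      rw [he, abs_neg]
      exact hk
    · refine ⟨c 0 - k1, ?_⟩
      have he : (N-1)*(-z) - (-(c 0:ℝ)) - ((c 0 - k1 : ℤ):ℝ) = -((N-1)*z - (k1:ℝ)) := by
        push_cast; ring
      rw [he, abs_neg]
      exact hk1
  · -- positive case
    apply auxkey N ((c 0 : ℝ)) z
    · exact_mod_cast hpos
    · linarith [le_abs_self ((c 0 : ℝ)), hstd1a]
    · exact hz14
    · exact hε
    · exact heq
    · exact hm'
    · refine ⟨k1 - c 0, ?_⟩
      have he : (N-1)*z - (c 0:ℝ) - ((k1 - c 0 : ℤ):ℝ) = (N-1)*z - (k1:ℝ) := by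
        push_cast; ring
      rw [he]
      exact hk1

end
end

section
/- Let Y ⊆ R be a compact set and suppose there exists α ≠ 0 such that α·Y ⊆ (−1/2, 1/2) and π(α·Y) is quasi-convex in T = R/Z. Then Y is quasi-convex in R (with respect to characters of R, i.e., continuous homomorphisms R → T). -/
open Filter Topology

noncomputable section

lemma abs_lt_one_iff_zero {k : ℤ} (h : |(k:ℝ)| < 1) : k = 0 := by
  have h2 : |k| < 1 := by exact_mod_cast (by rwa [← Int.cast_abs] at h : ((|k|:ℤ):ℝ) < 1)
  rw [abs_lt] at h2
  omega

/-- Auxiliary: the character `y ↦ π(r·y)` of `ℝ`. -/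
def charR (r : ℝ) : ℝ →+ 𝕋 :=
  (QuotientAddGroup.mk' (AddSubgroup.zmultiples (1:ℝ))).comp (AddMonoidHom.mulLeft r)

lemma charR_apply (r y : ℝ) : charR r y = ((r*y : ℝ) : 𝕋) := rfl

lemma charR_continuous (r : ℝ) : Continuous (charR r) :=
  continuous_quotient_mk'.comp (continuous_const.mul continuous_id)

lemma coe_eq_coe_int (a b : ℝ) (h : (a : 𝕋) = (b : 𝕋)) : ∃ k : ℤ, a - b = k := by
  have h2 : ((a - b : ℝ) : 𝕋) = 0 := by
    rw [AddCircle.coe_sub, h, sub_self]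
  rw [AddCircle.coe_eq_zero_iff] at h2
  obtain ⟨n, hn⟩ := h2
  exact ⟨n, by simpa using hn.symm⟩

/-- a compact `Y ⊆ ℝ` with `α·Y ⊆ (-1/2, 1/2)` and `π(α·Y)`
quasi-convex in `𝕋` (for some `α ≠ 0`) is quasi-convex in `ℝ`. -/
theorem stmt16 (Y : Set ℝ) (hY : IsCompact Y) (α : ℝ) (hα : α ≠ 0)
    (hsub : ∀ y ∈ Y, α * y ∈ Set.Ioo (-(1 / 2) : ℝ) (1 / 2))
    (hqc : qcHull 𝕋 ((fun y : ℝ => ((α * y : ℝ) : 𝕋)) '' Y)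
      = (fun y : ℝ => ((α * y : ℝ) : 𝕋)) '' Y) :
    qcHull ℝ Y = Y := by
  apply Set.Subset.antisymm
  · intro x hx
    have hαY : ∀ y ∈ Y, |α * y| < 1/2 := by
      intro y hy
      have := hsub y hy
      rw [abs_lt]
      exact ⟨by linarith [this.1], this.2⟩
    set c : ℝ := α * x with hc
    -- Step a : for every t ∈ (0, 1/2], π(t·c) ∈ T₊
    have key : ∀ t : ℝ, 0 < t → t ≤ 1/2 → ∃ s : ℝ, |s| ≤ 1/4 ∧ (s : 𝕋) = ((t*c : ℝ) : 𝕋) := by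
      intro t ht ht2
      have hmem : charR (t*α) ∈ polar ℝ Y := by
        refine ⟨charR_continuous _, fun y hy => ?_⟩
        refine ⟨t*α*y, ?_, rfl⟩
        have h1 : |α * y| < 1/2 := hαY y hy
        have : |t*α*y| = t * |α * y| := by
          rw [mul_assoc, abs_mul, abs_of_pos ht]
        rw [this]
        nlinarith [abs_nonneg (α*y)]
      have := hx (charR (t*α)) hmem
      obtain ⟨s, hs1, hs2⟩ := this
      refine ⟨s, hs1, ?_⟩
      rw [hs2, charR_apply]
      rw [hc, mul_assoc]
    -- Step b : |c| ≤ 1/2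
    have hb : |c| ≤ 1/2 := by
      by_contra hcon
      push_neg at hcon
      have hcpos : (0:ℝ) < |c| := by linarith
      set t : ℝ := min (1/2) (1/(2*|c|)) with htdef
      have ht0 : 0 < t := lt_min (by norm_num) (by positivity)
      have ht2 : t ≤ 1/2 := min_le_left _ _
      have htc_le : t * |c| ≤ 1/2 := by
        have : t ≤ 1/(2*|c|) := min_le_right _ _
        calc t * |c| ≤ (1/(2*|c|)) * |c| := by nlinarith
          _ = 1/2 := by field_simp
      have htc_gt : 1/4 < t * |c| := by
        rcases le_or_gt (1/2) (1/(2*|c|)) with h | h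
        · have ht : t = 1/2 := by rw [htdef, min_eq_left h]
          rw [ht]; linarith
        · have ht : t = 1/(2*|c|) := by rw [htdef, min_eq_right h.le]
          rw [ht]
          have : (1/(2*|c|)) * |c| = 1/2 := by field_simp
          rw [this]; norm_num
      obtain ⟨s, hs1, hs2⟩ := key t ht0 ht2
      obtain ⟨k, hk⟩ := coe_eq_coe_int _ _ hs2
      have habs : |t*c| = t*|c| := by rw [abs_mul, abs_of_pos ht0]
      have hk0 : k = 0 := by
        have h1 : |(k:ℝ)| < 1 := by
          have : (k:ℝ) = s - t*c := hk.symm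
          rw [this, abs_sub_comm]
          calc |t*c - s| ≤ |t*c| + |s| := abs_sub _ _
            _ ≤ 1/2 + 1/4 := by rw [habs]; linarith
            _ < 1 := by norm_num
        exact_mod_cast abs_lt_one_iff_zero (k := k) h1
      rw [hk0] at hk
      have : s = t*c := by push_cast at hk; linarith
      rw [this, habs] at hs1
      linarith
    -- Step c : π(c) is in the quasi-convex hull of π(α·Y)
    have hcmem : ((c : ℝ) : 𝕋) ∈ qcHull 𝕋 ((fun y : ℝ => ((α * y : ℝ) : 𝕋)) '' Y) := by
      intro χ hχ
      have hmem : χ.comp (charR α) ∈ polar ℝ Y := by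
        refine ⟨hχ.1.comp (charR_continuous α), fun y hy => ?_⟩
        exact hχ.2 _ ⟨y, hy, rfl⟩
      exact hx (χ.comp (charR α)) hmem
    rw [hqc] at hcmem
    obtain ⟨y₀, hy₀, hy₀eq⟩ := hcmem
    obtain ⟨k, hk⟩ := coe_eq_coe_int _ _ hy₀eq
    have hk0 : k = 0 := by
      have h1 : |(k:ℝ)| < 1 := by
        rw [← hk]
        calc |α*y₀ - c| ≤ |α*y₀| + |c| := abs_sub _ _
          _ < 1/2 + 1/2 := by
              have := hαY y₀ hy₀
              have h2 : |c| ≤ 1/2 := hb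
              -- need strict somewhere : |α*y₀| < 1/2 and |c| ≤ 1/2
              linarith
          _ = 1 := by norm_num
      exact_mod_cast abs_lt_one_iff_zero (k := k) h1
    rw [hk0] at hk
    push_cast at hk
    have : α * y₀ = c := by linarith
    have hxy : x = y₀ := by
      apply mul_left_cancel₀ hα
      rw [← hc, this]
    rw [hxy]; exact hy₀
  · intro y hy χ hχ
    exact hχ.2 y hy
end
end
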